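/- arXiv:1612.01600 — 2 statements merged into one kernel-verified Lean document; each statement's English description precedes it below -/
import Mathlib

section
/- (Lemma 2, second part.) Let {G_k}_{k≥0} be a B-strongly connected sequence of directed graphs on n nodes, each containing all self-loops, with associated column-stochastic weight matrices {A_k}, and define δ = inf_{k≥0} min_{1≤i≤n} [A_{k:0} 𝟏_n]_i. Then there exists a sequence {φ_k}_{k≥0} of stochastic vectors in ℝ^n satisfying both |[A_{k:t}]_{ij} − φ_k^i| ≤ 4 (1 − 1/n^{nB})^{(k−t)/B} for all k ≥ t ≥ 0 and all i, j, and φ_k^j ≥ δ/n for all k ≥ 0 and all j ∈ {1,…,n}. -/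
open Finset Matrix

/-- Number of out-neighbors of `j` other than itself, in the digraph with edge set `E`. -/
def outDeg {n : ℕ} (E : Finset (Fin n × Fin n)) (j : Fin n) : ℕ :=
  (Finset.univ.filter fun i => (j, i) ∈ E ∧ i ≠ j).card

/-- Number of in-neighbors of `j` other than itself, in the digraph with edge set `E`. -/
def inDeg {n : ℕ} (E : Finset (Fin n × Fin n)) (j : Fin n) : ℕ :=
  (Finset.univ.filter fun i => (i, j) ∈ E ∧ i ≠ j).card

/-- The column-stochastic weight matrix associated with the edge set `E`:
`A i j = 1/(d_j + 1)` if `(j,i) ∈ E` and `0` otherwise. -/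
noncomputable def weightMatrix {n : ℕ} (E : Finset (Fin n × Fin n)) :
    Matrix (Fin n) (Fin n) ℝ :=
  Matrix.of fun i j => if (j, i) ∈ E then 1 / (outDeg E j + 1) else 0

/-- `prodA A t m = A (t+m) * A (t+m-1) * ⋯ * A t`, i.e. the backward product `A_{(t+m):t}`. -/
noncomputable def prodA {n : ℕ} (A : ℕ → Matrix (Fin n) (Fin n) ℝ) (t : ℕ) :
    ℕ → Matrix (Fin n) (Fin n) ℝ
  | 0 => A t
  | m + 1 => A (t + m + 1) * prodA A t m

/-- The digraph on `Fin n` with edge set `E` is strongly connected. -/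
def StronglyConnected {n : ℕ} (E : Finset (Fin n × Fin n)) : Prop :=
  ∀ i j : Fin n, Relation.ReflTransGen (fun a b => (a, b) ∈ E) i j

/-- The graph sequence `E` is `B`-strongly connected. -/
def BStronglyConnected {n : ℕ} (E : ℕ → Finset (Fin n × Fin n)) (B : ℕ) : Prop :=
  ∀ k : ℕ, StronglyConnected ((Finset.Ico (k * B) ((k + 1) * B)).biUnion E)

noncomputable def prodLen {n : ℕ} (A : ℕ → Matrix (Fin n) (Fin n) ℝ) (s : ℕ) :
    ℕ → Matrix (Fin n) (Fin n) ℝ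
  | 0 => 1
  | m + 1 => A (s + m) * prodLen A s m

lemma prodLen_add {n : ℕ} (A : ℕ → Matrix (Fin n) (Fin n) ℝ) (s a b : ℕ) :
    prodLen A s (a + b) = prodLen A (s + a) b * prodLen A s a := by
  induction b with
  | zero => simp [prodLen]
  | succ b ih =>
      show prodLen A s ((a + b) + 1) = _
      rw [prodLen, ih, prodLen, mul_assoc]
      ring_nf

lemma prodA_eq_prodLen {n : ℕ} (A : ℕ → Matrix (Fin n) (Fin n) ℝ) (t m : ℕ) :
    prodA A t m = prodLen A t (m + 1) := by
  induction m with
  | zero => simp [prodA, prodLen]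
  | succ m ih => rw [prodA, ih]; rfl

def CS {n : ℕ} (M : Matrix (Fin n) (Fin n) ℝ) : Prop :=
  (∀ i j, 0 ≤ M i j) ∧ ∀ j, ∑ i, M i j = 1

lemma CS_one {n : ℕ} : CS (1 : Matrix (Fin n) (Fin n) ℝ) := by
  constructor
  · intro i j
    by_cases h : i = j <;> simp [Matrix.one_apply, h]
  · intro j
    simp [Matrix.one_apply]

lemma CS_mul {n : ℕ} {M N : Matrix (Fin n) (Fin n) ℝ} (hM : CS M) (hN : CS N) :
    CS (M * N) := by
  constructor
  · intro i j
    rw [Matrix.mul_apply]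
    exact Finset.sum_nonneg fun l _ => mul_nonneg (hM.1 i l) (hN.1 l j)
  · intro j
    simp only [Matrix.mul_apply]
    rw [Finset.sum_comm]
    have : ∀ l : Fin n, ∑ i, M i l * N l j = N l j := by
      intro l
      rw [← Finset.sum_mul, hM.2 l, one_mul]
    rw [Finset.sum_congr rfl fun l _ => this l, hN.2 j]

lemma filter_card {n : ℕ} (E : Finset (Fin n × Fin n)) (j : Fin n)
    (hj : (j, j) ∈ E) :
    (Finset.univ.filter fun i => (j, i) ∈ E).card = outDeg E j + 1 := by
  have : (Finset.univ.filter fun i => (j, i) ∈ E)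
      = insert j (Finset.univ.filter fun i => (j, i) ∈ E ∧ i ≠ j) := by
    ext i
    by_cases h : i = j <;> simp [h, hj]
  rw [this, Finset.card_insert_of_notMem (by simp), outDeg]

lemma outDeg_lt {n : ℕ} (E : Finset (Fin n × Fin n)) (j : Fin n) (hn : 1 ≤ n) :
    outDeg E j + 1 ≤ n := by
  have : (Finset.univ.filter fun i => (j, i) ∈ E ∧ i ≠ j) ⊆ Finset.univ.erase j := by
    intro i hi
    simp only [Finset.mem_filter] at hi
    exact Finset.mem_erase.2 ⟨hi.2.2, Finset.mem_univ i⟩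
  have h2 := Finset.card_le_card this
  rw [Finset.card_erase_of_mem (Finset.mem_univ j), Finset.card_univ, Fintype.card_fin] at h2
  unfold outDeg
  omega

lemma CS_weight {n : ℕ} (E : Finset (Fin n × Fin n)) (hj : ∀ j, (j, j) ∈ E) :
    CS (weightMatrix E) := by
  constructor
  · intro i j
    simp only [weightMatrix, Matrix.of_apply]
    split
    · positivity
    · exact le_rfl
  · intro j
    simp only [weightMatrix, Matrix.of_apply]
    rw [Finset.sum_ite, Finset.sum_const, Finset.sum_const_zero, add_zero,
      filter_card E j (hj j), nsmul_eq_mul]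
    have : ((outDeg E j : ℝ) + 1) ≠ 0 := by positivity
    push_cast
    field_simp

lemma weight_entry_ge {n : ℕ} (E : Finset (Fin n × Fin n)) (hn : 1 ≤ n)
    {i j : Fin n} (h : (j, i) ∈ E) :
    1 / (n : ℝ) ≤ weightMatrix E i j := by
  simp only [weightMatrix, Matrix.of_apply, if_pos h]
  apply one_div_le_one_div_of_le
  · positivity
  · have := outDeg_lt E j hn
    exact_mod_cast this

lemma CS_prodLen {n : ℕ} {A : ℕ → Matrix (Fin n) (Fin n) ℝ}
    (hA : ∀ k, CS (A k)) (s m : ℕ) : CS (prodLen A s m) := by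
  induction m with
  | zero => exact CS_one
  | succ m ih => exact CS_mul (hA _) ih

lemma CS_entry_le_one {n : ℕ} {M : Matrix (Fin n) (Fin n) ℝ} (h : CS M)
    (i j : Fin n) : M i j ≤ 1 := by
  calc M i j ≤ ∑ l, M l j := Finset.single_le_sum (fun l _ => h.1 l j) (Finset.mem_univ i)
  _ = 1 := h.2 j

lemma mul_entry_ge {n : ℕ} {M N : Matrix (Fin n) (Fin n) ℝ}
    (hM : ∀ i j, 0 ≤ M i j) (hN : ∀ i j, 0 ≤ N i j) (i l j : Fin n) :
    M i l * N l j ≤ (M * N) i j := by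
  rw [Matrix.mul_apply]
  exact Finset.single_le_sum (f := fun l => M i l * N l j)
    (fun l _ => mul_nonneg (hM i l) (hN l j)) (Finset.mem_univ l)

lemma cross_edge {α : Type*} {r : α → α → Prop} {S : Finset α} [DecidableEq α]
    {x y : α} (h : Relation.ReflTransGen r x y) (hx : x ∈ S) (hy : y ∉ S) :
    ∃ a b, r a b ∧ a ∈ S ∧ b ∉ S := by
  induction h using Relation.ReflTransGen.head_induction_on with
  | refl => exact absurd hx hy
  | head hab _ ih =>
      rename_i a b _
      by_cases hb : b ∈ S
      · exact ih hb
      · exact ⟨a, b, hab, hx, hb⟩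

section Main

variable {n B : ℕ} {E : ℕ → Finset (Fin n × Fin n)}
  {A : ℕ → Matrix (Fin n) (Fin n) ℝ}

lemma diag_prodLen (hn : 1 ≤ n) (hloop : ∀ k i, (i, i) ∈ E k)
    (hA : ∀ k, A k = weightMatrix (E k)) (s m : ℕ) (i : Fin n) :
    (1 / (n : ℝ)) ^ m ≤ prodLen A s m i i := by
  have hAcs : ∀ k, CS (A k) := fun k => (hA k) ▸ CS_weight (E k) (fun j => hloop k j)
  induction m with
  | zero => simp [prodLen, Matrix.one_apply]
  | succ m ih =>
      calc ((1:ℝ)/n) ^ (m+1) = (1/n) * (1/n)^m := by ring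
      _ ≤ A (s+m) i i * prodLen A s m i i := by
          apply mul_le_mul
          · rw [hA]; exact weight_entry_ge (E (s+m)) hn (hloop (s+m) i)
          · exact ih
          · positivity
          · exact ((hA (s+m)) ▸ CS_weight (E (s+m)) (fun j => hloop (s+m) j)).1 i i
      _ ≤ (A (s+m) * prodLen A s m) i i :=
          mul_entry_ge (hAcs (s+m)).1 (CS_prodLen hAcs s m).1 i i i
      _ = prodLen A s (m+1) i i := rfl

lemma edge_prodLen (hn : 1 ≤ n) (hloop : ∀ k i, (i, i) ∈ E k)
    (hA : ∀ k, A k = weightMatrix (E k)) {u m s : ℕ} (hs1 : u ≤ s) (hs2 : s < u + m)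
    {a b : Fin n} (hab : (a, b) ∈ E s) :
    (1 / (n : ℝ)) ^ m ≤ prodLen A u m b a := by
  have hAcs : ∀ k, CS (A k) := fun k => (hA k) ▸ CS_weight (E k) (fun j => hloop k j)
  have hnn : ∀ s m i j, 0 ≤ prodLen A s m i j := fun s m => (CS_prodLen hAcs s m).1
  set r := m - (s - u) - 1 with hr
  have hm : m = (s - u) + (1 + r) := by omega
  have husu : u + (s - u) = s := by omega
  have hsplit : prodLen A u m = prodLen A s (1 + r) * prodLen A u (s - u) := by
    rw [hm, prodLen_add, husu]
  have hsplit2 : prodLen A s (1 + r) = prodLen A (s + 1) r * prodLen A s 1 := by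
    rw [prodLen_add]
  have h1 : prodLen A s 1 = A s := by
    show A (s + 0) * 1 = A s
    rw [mul_one, Nat.add_zero]
  have hAba : (1:ℝ)/n ≤ A s b a := by
    rw [hA]; exact weight_entry_ge (E s) hn hab
  have step1 : ((1:ℝ)/n)^r * ((1:ℝ)/n) ≤ prodLen A s (1 + r) b a := by
    calc ((1:ℝ)/n)^r * ((1:ℝ)/n)
        ≤ prodLen A (s+1) r b b * A s b a := by
          apply mul_le_mul (diag_prodLen hn hloop hA _ _ _) hAba (by positivity) (hnn _ _ _ _)
    _ ≤ (prodLen A (s+1) r * A s) b a := mul_entry_ge (hnn _ _) (hAcs s).1 b b a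
    _ = prodLen A s (1 + r) b a := by rw [hsplit2, h1]
  calc ((1:ℝ)/n)^m = ((1:ℝ)/n)^r * ((1:ℝ)/n) * ((1:ℝ)/n)^(s-u) := by
        rw [hm]; ring
  _ ≤ prodLen A s (1 + r) b a * prodLen A u (s-u) a a := by
        apply mul_le_mul step1 (diag_prodLen hn hloop hA _ _ _) (by positivity)
          (le_trans (by positivity) step1)
  _ ≤ (prodLen A s (1 + r) * prodLen A u (s-u)) b a :=
        mul_entry_ge (hnn _ _) (hnn _ _) b a a
  _ = prodLen A u m b a := by rw [hsplit]

lemma reach_growth (hn : 1 ≤ n) (hloop : ∀ k i, (i, i) ∈ E k)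
    (hconn : BStronglyConnected E B)
    (hA : ∀ k, A k = weightMatrix (E k)) (w : ℕ) (j : Fin n) :
    ∀ m : ℕ, ∃ S : Finset (Fin n), j ∈ S ∧ min (m+1) n ≤ S.card ∧
      ∀ i ∈ S, (1/(n:ℝ))^(m*B) ≤ prodLen A (w*B) (m*B) i j := by
  have hAcs : ∀ k, CS (A k) := fun k => (hA k) ▸ CS_weight (E k) (fun j => hloop k j)
  have hnn : ∀ s m i j, 0 ≤ prodLen A s m i j := fun s m => (CS_prodLen hAcs s m).1
  intro m
  induction m with
  | zero =>
      refine ⟨{j}, Finset.mem_singleton_self j, by simp, ?_⟩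
      intro i hi
      rw [Finset.mem_singleton] at hi
      subst hi
      simp [prodLen, Matrix.one_apply]
  | succ m ih =>
      obtain ⟨S, hjS, hcard, hS⟩ := ih
      have hsplit : prodLen A (w*B) ((m+1)*B)
          = prodLen A ((w+m)*B) B * prodLen A (w*B) (m*B) := by
        have h1 : (m+1)*B = m*B + B := by ring
        have h2 : w*B + m*B = (w+m)*B := by ring
        rw [h1, prodLen_add, h2]
      have hstep : ∀ a b : Fin n, a ∈ S → (1/(n:ℝ))^B ≤ prodLen A ((w+m)*B) B b a →
          (1/(n:ℝ))^((m+1)*B) ≤ prodLen A (w*B) ((m+1)*B) b j := by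
        intro a b haS hwin
        calc ((1:ℝ)/n)^((m+1)*B) = (1/n)^B * (1/n)^(m*B) := by rw [← pow_add]; ring_nf
        _ ≤ prodLen A ((w+m)*B) B b a * prodLen A (w*B) (m*B) a j := by
            apply mul_le_mul hwin (hS a haS) (by positivity) (le_trans (by positivity) hwin)
        _ ≤ (prodLen A ((w+m)*B) B * prodLen A (w*B) (m*B)) b j :=
            mul_entry_ge (hnn _ _) (hnn _ _) b a j
        _ = prodLen A (w*B) ((m+1)*B) b j := by rw [hsplit]
      set T := Finset.univ.filter
        (fun i => (1/(n:ℝ))^((m+1)*B) ≤ prodLen A (w*B) ((m+1)*B) i j) with hT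
      have hST : S ⊆ T := by
        intro i hiS
        rw [hT, Finset.mem_filter]
        exact ⟨Finset.mem_univ i, hstep i i hiS (diag_prodLen hn hloop hA _ _ _)⟩
      have hjT : j ∈ T := hST hjS
      have hTgood : ∀ i ∈ T, (1/(n:ℝ))^((m+1)*B) ≤ prodLen A (w*B) ((m+1)*B) i j := by
        intro i hi
        rw [hT, Finset.mem_filter] at hi
        exact hi.2
      by_cases hfull : n ≤ S.card
      · exact ⟨T, hjT, le_trans (min_le_right _ _) (le_trans hfull (Finset.card_le_card hST)),
          hTgood⟩
      · have : ∃ cnode : Fin n, cnode ∉ S := by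
          by_contra hc
          push_neg at hc
          have : S = Finset.univ := Finset.eq_univ_of_forall hc
          rw [this, Finset.card_univ, Fintype.card_fin] at hfull
          omega
        obtain ⟨cnode, hcn⟩ := this
        obtain ⟨a, b, hab, haS, hbS⟩ := cross_edge (hconn (w+m) j cnode) hjS hcn
        simp only [Finset.mem_biUnion, Finset.mem_Ico] at hab
        obtain ⟨s, ⟨hs1, hs2⟩, habE⟩ := hab
        have hwin : (1/(n:ℝ))^B ≤ prodLen A ((w+m)*B) B b a := by
          apply edge_prodLen hn hloop hA hs1 _ habE
          calc s < (w+m+1)*B := hs2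
          _ = (w+m)*B + B := by ring
        have hbT : b ∈ T := by
          rw [hT, Finset.mem_filter]
          exact ⟨Finset.mem_univ b, hstep a b haS hwin⟩
        refine ⟨T, hjT, ?_, hTgood⟩
        have : insert b S ⊆ T := Finset.insert_subset hbT hST
        have h3 := Finset.card_le_card this
        rw [Finset.card_insert_of_notMem hbS] at h3
        omega

lemma window_pos (hn : 1 ≤ n) (hloop : ∀ k i, (i, i) ∈ E k)
    (hconn : BStronglyConnected E B)
    (hA : ∀ k, A k = weightMatrix (E k)) (w : ℕ) (i j : Fin n) :
    (1/(n:ℝ))^(n*B) ≤ prodLen A (w*B) (n*B) i j := by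
  obtain ⟨S, hjS, hcard, hS⟩ := reach_growth hn hloop hconn hA w j n
  have : S = Finset.univ := by
    have h1 : S.card ≤ n := by simpa using S.card_le_univ
    apply Finset.eq_univ_of_card
    simp only [Fintype.card_fin]
    omega
  exact hS i (this ▸ Finset.mem_univ i)

lemma contract {Q M : Matrix (Fin n) (Fin n) ℝ} (hQ : CS Q) {ε lo hi : ℝ}
    (hε : ∀ l j, ε ≤ Q l j) (i : Fin n)
    (hlo : ∀ j, lo ≤ M i j) (hhi : ∀ j, M i j ≤ hi) :
    ∃ lo' hi', hi' - lo' = (1 - n*ε)*(hi - lo) ∧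
      (∀ j, lo' ≤ (M*Q) i j) ∧ (∀ j, (M*Q) i j ≤ hi') := by
  refine ⟨ε * ∑ l, M i l + (1 - n*ε) * lo, ε * ∑ l, M i l + (1 - n*ε) * hi, by ring, ?_, ?_⟩
  all_goals {
    intro j
    have hsum : ∑ l : Fin n, (Q l j - ε) = 1 - n * ε := by
      rw [Finset.sum_sub_distrib, hQ.2 j, Finset.sum_const, Finset.card_univ,
        Fintype.card_fin, nsmul_eq_mul]
    have key : (M*Q) i j = (∑ l, (Q l j - ε) * M i l) + ε * ∑ l, M i l := by
      rw [Matrix.mul_apply, Finset.mul_sum, ← Finset.sum_add_distrib]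
      congr 1
      ext l
      ring
    rw [key]
    first
    | -- lower bound
      have h1 : (1 - n*ε) * lo ≤ ∑ l, (Q l j - ε) * M i l := by
        rw [← hsum, Finset.sum_mul]
        exact Finset.sum_le_sum fun l _ =>
          mul_le_mul_of_nonneg_left (hlo l) (sub_nonneg.2 (hε l j))
      linarith
    | -- upper bound
      have h1 : ∑ l, (Q l j - ε) * M i l ≤ (1 - n*ε) * hi := by
        rw [← hsum, Finset.sum_mul]
        exact Finset.sum_le_sum fun l _ =>
          mul_le_mul_of_nonneg_left (hhi l) (sub_nonneg.2 (hε l j))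
      linarith }

lemma lambda_b_nonneg (hn : 1 ≤ n) (hB : 1 ≤ B) :
    0 ≤ 1 - (n : ℝ) * (1/(n:ℝ))^(n*B) := by
  have hn0 : (0:ℝ) < n := by exact_mod_cast hn
  have h1 : ((1:ℝ)/n)^(n*B) ≤ (1/(n:ℝ))^1 := by
    apply pow_le_pow_of_le_one (by positivity)
    · rw [div_le_one hn0]; exact_mod_cast hn
    · exact Nat.one_le_iff_ne_zero.2 (by positivity)
  have h2 : (n:ℝ) * (1/(n:ℝ))^(n*B) ≤ n * (1/n)^1 := by
    apply mul_le_mul_of_nonneg_left h1 (le_of_lt hn0)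
  have h3 : (n:ℝ) * (1/n)^1 = 1 := by field_simp
  linarith

lemma osc_blocks (hn : 1 ≤ n) (hB : 1 ≤ B) (hloop : ∀ k i, (i, i) ∈ E k)
    (hconn : BStronglyConnected E B)
    (hA : ∀ k, A k = weightMatrix (E k)) (m : ℕ) :
    ∀ (w : ℕ) (H : Matrix (Fin n) (Fin n) ℝ), CS H → ∀ i : Fin n,
    ∃ lo hi, hi - lo ≤ (1 - (n:ℝ) * (1/(n:ℝ))^(n*B))^m ∧
      (∀ j, lo ≤ (H * prodLen A (w*B) (m*(n*B))) i j) ∧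
      (∀ j, (H * prodLen A (w*B) (m*(n*B))) i j ≤ hi) := by
  induction m with
  | zero =>
      intro w H hH i
      have h0 : 0*(n*B) = 0 := by ring
      have h1 : prodLen A (w*B) (0*(n*B)) = 1 := by rw [h0]; rfl
      refine ⟨0, 1, by norm_num, ?_, ?_⟩
      · intro j
        rw [h1, mul_one]
        exact hH.1 i j
      · intro j
        rw [h1, mul_one]
        exact CS_entry_le_one hH i j
  | succ m ih =>
      intro w H hH i
      have hAcs : ∀ k, CS (A k) := fun k => (hA k) ▸ CS_weight (E k) (fun j => hloop k j)
      have hdecomp : prodLen A (w*B) ((m+1)*(n*B))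
          = prodLen A ((w+n)*B) (m*(n*B)) * prodLen A (w*B) (n*B) := by
        have h1 : (m+1)*(n*B) = n*B + m*(n*B) := by ring
        have h2 : w*B + n*B = (w+n)*B := by ring
        rw [h1, prodLen_add, h2]
      obtain ⟨lo, hi, hlen, hlo, hhi⟩ := ih (w+n) H hH i
      obtain ⟨lo', hi', hlen', hlo', hhi'⟩ :=
        contract (CS_prodLen hAcs (w*B) (n*B))
          (fun l j => window_pos hn hloop hconn hA w l j) i hlo hhi
      refine ⟨lo', hi', ?_, ?_, ?_⟩
      · rw [hlen', pow_succ]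
        calc (1 - (n:ℝ) * (1/(n:ℝ))^(n*B)) * (hi - lo)
            ≤ (1 - (n:ℝ) * (1/(n:ℝ))^(n*B)) * (1 - (n:ℝ) * (1/(n:ℝ))^(n*B))^m :=
              mul_le_mul_of_nonneg_left hlen (lambda_b_nonneg hn hB)
        _ = (1 - (n:ℝ) * (1/(n:ℝ))^(n*B))^m * (1 - (n:ℝ) * (1/(n:ℝ))^(n*B)) := by ring
      · intro j
        have heq : H * prodLen A (w*B) ((m+1)*(n*B))
            = H * prodLen A ((w+n)*B) (m*(n*B)) * prodLen A (w*B) (n*B) := by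
          rw [hdecomp]; exact (mul_assoc _ _ _).symm
        rw [heq]
        exact hlo' j
      · intro j
        have heq : H * prodLen A (w*B) ((m+1)*(n*B))
            = H * prodLen A ((w+n)*B) (m*(n*B)) * prodLen A (w*B) (n*B) := by
          rw [hdecomp]; exact (mul_assoc _ _ _).symm
        rw [heq]
        exact hhi' j

lemma main_interval (hn : 1 ≤ n) (hB : 1 ≤ B) (hloop : ∀ k i, (i, i) ∈ E k)
    (hconn : BStronglyConnected E B)
    (hA : ∀ k, A k = weightMatrix (E k)) {t k : ℕ} (ht : t ≤ k) (i : Fin n) :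
    ∃ lo hi,
      hi - lo ≤ (1 - (n:ℝ)*(1/(n:ℝ))^(n*B))^(((k+1)/B - (t+B-1)/B)/n) ∧
      (∀ j, lo ≤ prodLen A t (k+1-t) i j) ∧ (∀ j, prodLen A t (k+1-t) i j ≤ hi) := by
  have hAcs : ∀ k, CS (A k) := fun k => (hA k) ▸ CS_weight (E k) (fun j => hloop k j)
  by_cases hM0 : ((k+1)/B - (t+B-1)/B)/n = 0
  · rw [hM0, pow_zero]
    exact ⟨0, 1, by norm_num, fun j => (CS_prodLen hAcs t (k+1-t)).1 i j,
      fun j => CS_entry_le_one (CS_prodLen hAcs t (k+1-t)) i j⟩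
  · have hBpos : 0 < B := hB
    have hnpos : 0 < n := hn
    -- notation (as plain terms): w0 = (t+B-1)/B, K = (k+1)/B, W = K - w0, M = W/n
    have F1 : (t+B-1)/B * B ≤ t+B-1 := Nat.div_mul_le_self _ _
    have F2 : t+B-1 < ((t+B-1)/B + 1) * B :=
      (Nat.div_lt_iff_lt_mul hBpos).1 (Nat.lt_succ_self _)
    have F2' : ((t+B-1)/B + 1)*B = (t+B-1)/B*B + B := by ring
    have htw0 : t ≤ (t+B-1)/B * B := by omega
    have hM1 : 1 ≤ ((k+1)/B - (t+B-1)/B)/n := Nat.one_le_iff_ne_zero.2 hM0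
    have F5 : n ≤ (k+1)/B - (t+B-1)/B := (Nat.one_le_div_iff hnpos).1 hM1
    have F4 : ((k+1)/B - (t+B-1)/B)/n * n ≤ (k+1)/B - (t+B-1)/B :=
      Nat.div_mul_le_self _ _
    have F3 : (k+1)/B * B ≤ k+1 := Nat.div_mul_le_self _ _
    have hsumle : (t+B-1)/B + ((k+1)/B - (t+B-1)/B)/n * n ≤ (k+1)/B := by omega
    have hle : ((t+B-1)/B + ((k+1)/B - (t+B-1)/B)/n * n) * B ≤ k+1 :=
      le_trans (Nat.mul_le_mul_right B hsumle) F3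
    have hexp : ((t+B-1)/B + ((k+1)/B - (t+B-1)/B)/n * n) * B
        = (t+B-1)/B*B + ((k+1)/B - (t+B-1)/B)/n*(n*B) := by ring
    -- the three pieces
    have hab : t + ((t+B-1)/B*B - t) + ((k+1)/B - (t+B-1)/B)/n*(n*B) ≤ k+1 := by omega
    have hsum : k+1-t = ((t+B-1)/B*B - t)
        + (((k+1)/B - (t+B-1)/B)/n*(n*B) + (k+1 - (t+B-1)/B*B - ((k+1)/B - (t+B-1)/B)/n*(n*B))) := by
      omega
    have hta : t + ((t+B-1)/B*B - t) = (t+B-1)/B*B := by omega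
    have heq : prodLen A t (k+1-t)
        = prodLen A ((t+B-1)/B*B + ((k+1)/B - (t+B-1)/B)/n*(n*B))
            (k+1 - (t+B-1)/B*B - ((k+1)/B - (t+B-1)/B)/n*(n*B))
          * prodLen A ((t+B-1)/B*B) (((k+1)/B - (t+B-1)/B)/n*(n*B))
          * prodLen A t ((t+B-1)/B*B - t) := by
      rw [hsum, prodLen_add, hta, prodLen_add]
    obtain ⟨lo, hi, hlen, hlo, hhi⟩ :=
      osc_blocks hn hB hloop hconn hA (((k+1)/B - (t+B-1)/B)/n) ((t+B-1)/B)
        (prodLen A ((t+B-1)/B*B + ((k+1)/B - (t+B-1)/B)/n*(n*B))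
            (k+1 - (t+B-1)/B*B - ((k+1)/B - (t+B-1)/B)/n*(n*B)))
        (CS_prodLen hAcs _ _) i
    obtain ⟨lo', hi', hlen', hlo', hhi'⟩ :=
      contract (Q := prodLen A t ((t+B-1)/B*B - t)) (CS_prodLen hAcs t _)
        (ε := 0) (fun l j => (CS_prodLen hAcs t _).1 l j) i hlo hhi
    refine ⟨lo', hi', ?_, ?_, ?_⟩
    · rw [hlen']
      calc (1 - (n:ℝ)*0)*(hi - lo) = hi - lo := by ring
      _ ≤ _ := hlen
    · intro j
      rw [heq]
      exact hlo' j
    · intro j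
      rw [heq]
      exact hhi' j

end Main

theorem limit_vectors_lower_bound
    (n B : ℕ) (hn : 1 ≤ n) (hB : 1 ≤ B)
    (E : ℕ → Finset (Fin n × Fin n)) (hloop : ∀ k i, (i, i) ∈ E k)
    (hconn : BStronglyConnected E B)
    (A : ℕ → Matrix (Fin n) (Fin n) ℝ) (hA : ∀ k, A k = weightMatrix (E k))
    (δ : ℝ) (hδ : δ = ⨅ k : ℕ, ⨅ i : Fin n, (prodA A 0 k *ᵥ fun _ => (1 : ℝ)) i) :
    ∃ φ : ℕ → Fin n → ℝ,
      (∀ k, (∀ i, 0 ≤ φ k i) ∧ ∑ i, φ k i = 1) ∧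
      (∀ t k, t ≤ k → ∀ i j,
        |prodA A t (k - t) i j - φ k i|
          ≤ 4 * (1 - 1 / (n : ℝ) ^ (n * B)) ^ (((k : ℝ) - (t : ℝ)) / (B : ℝ))) ∧
      (∀ k, ∀ j : Fin n, φ k j ≥ δ / n) := by
  have hAcs : ∀ k, CS (A k) := fun k => (hA k) ▸ CS_weight (E k) (fun j => hloop k j)
  have hnR : (0:ℝ) < n := by exact_mod_cast hn
  have hBR : (0:ℝ) < B := by exact_mod_cast hB
  haveI : Nonempty (Fin n) := Fin.pos_iff_nonempty.1 hn
  set φ : ℕ → Fin n → ℝ := fun k i => (1/(n:ℝ)) * ∑ j, prodLen A 0 (k+1) i j with hφdef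
  have hφnn : ∀ k i, 0 ≤ φ k i := fun k i =>
    mul_nonneg (by positivity)
      (Finset.sum_nonneg fun j _ => (CS_prodLen hAcs 0 (k+1)).1 i j)
  have hφsum : ∀ k, ∑ i, φ k i = 1 := by
    intro k
    simp only [hφdef]
    rw [← Finset.mul_sum, (Finset.sum_comm : ∑ i, ∑ j, prodLen A 0 (k+1) i j = ∑ j, ∑ i, prodLen A 0 (k+1) i j)]
    have h1 : ∀ j : Fin n, ∑ i, prodLen A 0 (k+1) i j = 1 := (CS_prodLen hAcs 0 (k+1)).2
    rw [Finset.sum_congr rfl fun j _ => h1 j, Finset.sum_const, Finset.card_univ,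
      Fintype.card_fin, nsmul_eq_mul, mul_one]
    field_simp
  have hmv : ∀ k j, (prodA A 0 k *ᵥ fun _ => (1:ℝ)) j = ∑ l, prodLen A 0 (k+1) j l := by
    intro k j
    rw [prodA_eq_prodLen]
    simp [Matrix.mulVec, dotProduct]
  refine ⟨φ, fun k => ⟨hφnn k, hφsum k⟩, ?_, ?_⟩
  · -- main contraction bound
    intro t k htk i j
    have hP : prodA A t (k - t) = prodLen A t (k+1-t) := by
      have h1 : k - t + 1 = k + 1 - t := by omega
      rw [prodA_eq_prodLen, h1]
    rcases eq_or_lt_of_le hn with hn1 | hn2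
    · -- n = 1 case
      have hsub : ∀ x y : Fin n, x = y := by
        intro x y
        have hx := x.isLt
        have hy := y.isLt
        ext
        omega
      have huniv : ∀ x : Fin n, (Finset.univ : Finset (Fin n)) = {x} := by
        intro x
        ext z
        simp [hsub z x]
      have hentry : ∀ m s (x y : Fin n), prodLen A s m x y = 1 := by
        intro m s x y
        have h2 := (CS_prodLen hAcs s m).2 y
        rw [huniv x, Finset.sum_singleton] at h2
        rw [hsub x y] at h2 ⊢
        exact h2
      have hφ1 : φ k i = 1 := by
        simp only [hφdef]
        rw [huniv i, Finset.sum_singleton, hentry, ← hn1]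
        norm_num
      rw [hP, hentry, hφ1]
      simp only [sub_self, abs_zero]
      have h1n : (1:ℝ) ≤ (n:ℝ)^(n*B) := one_le_pow₀ (by exact_mod_cast hn)
      have hbase : (0:ℝ) ≤ 1 - 1/(n:ℝ)^(n*B) := by
        have h2 : 1/(n:ℝ)^(n*B) ≤ 1 := by
          rw [div_le_one (by positivity)]
          exact h1n
        linarith
      exact mul_nonneg (by norm_num) (Real.rpow_nonneg hbase _)
    · -- n ≥ 2 case
      obtain ⟨lo, hi, hlen, hlo, hhi⟩ := main_interval hn hB hloop hconn hA htk i
      have hfull : prodLen A 0 (k+1) = prodLen A t (k+1-t) * prodLen A 0 t := by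
        have h2 := prodLen_add A 0 t (k+1-t)
        rw [Nat.zero_add, show t + (k+1-t) = k+1 from by omega] at h2
        exact h2
      set cvec : Fin n → ℝ := fun l => (1/(n:ℝ)) * ∑ j, prodLen A 0 t l j with hcvec
      have hcnn : ∀ l, 0 ≤ cvec l := fun l =>
        mul_nonneg (by positivity) (Finset.sum_nonneg fun j _ => (CS_prodLen hAcs 0 t).1 l j)
      have hcsum : ∑ l, cvec l = 1 := by
        simp only [hcvec]
        rw [← Finset.mul_sum, (Finset.sum_comm : ∑ i, ∑ j, prodLen A 0 t i j = ∑ j, ∑ i, prodLen A 0 t i j)]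
        have h1 : ∀ j : Fin n, ∑ l, prodLen A 0 t l j = 1 := (CS_prodLen hAcs 0 t).2
        rw [Finset.sum_congr rfl fun j _ => h1 j, Finset.sum_const, Finset.card_univ,
          Fintype.card_fin, nsmul_eq_mul, mul_one]
        field_simp
      have hφc : φ k i = ∑ l, prodLen A t (k+1-t) i l * cvec l := by
        simp only [hφdef, hcvec, hfull, Matrix.mul_apply, Finset.mul_sum]
        rw [Finset.sum_comm]
        exact Finset.sum_congr rfl fun l _ => Finset.sum_congr rfl fun j' _ => by ring
      have hφlo : lo ≤ φ k i := by
        rw [hφc]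
        calc lo = ∑ l, lo * cvec l := by rw [← Finset.mul_sum, hcsum, mul_one]
        _ ≤ ∑ l, prodLen A t (k+1-t) i l * cvec l :=
            Finset.sum_le_sum fun l _ => mul_le_mul_of_nonneg_right (hlo l) (hcnn l)
      have hφhi : φ k i ≤ hi := by
        rw [hφc]
        calc ∑ l, prodLen A t (k+1-t) i l * cvec l
            ≤ ∑ l, hi * cvec l :=
            Finset.sum_le_sum fun l _ => mul_le_mul_of_nonneg_right (hhi l) (hcnn l)
        _ = hi := by rw [← Finset.mul_sum, hcsum, mul_one]
      have habs : |prodA A t (k - t) i j - φ k i| ≤ hi - lo := by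
        rw [hP]
        rw [abs_le]
        constructor
        · linarith [hlo j]
        · linarith [hhi j]
      -- numeric chain
      set lam : ℝ := 1 - 1 / (n : ℝ) ^ (n * B) with hlam
      set eps : ℝ := 1 / (n : ℝ) ^ (n * B) with heps
      have hn2R : (2:ℝ) ≤ n := by exact_mod_cast hn2
      have h12 : (1:ℝ)/n ≤ 1/2 := by
        apply one_div_le_one_div_of_le
        · norm_num
        · exact hn2R
      have hnB2 : 2 ≤ n*B := le_trans hn2 (Nat.le_mul_of_pos_right n hB)
      have heps_eq : ((1:ℝ)/n)^(n*B) = eps := by rw [heps]; exact _root_.one_div_pow _ _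
      have heps2 : eps ≤ ((1:ℝ)/n)^2 := by
        rw [← heps_eq]
        apply pow_le_pow_of_le_one (by positivity) _ hnB2
        rw [div_le_one hnR]
        exact_mod_cast hn
      have h1n2 : ((1:ℝ)/n)^2 ≤ 1/4 := by
        calc ((1:ℝ)/n)^2 ≤ (1/2)^2 := by
              apply pow_le_pow_left₀ (by positivity) h12
        _ = 1/4 := by norm_num
      have heps4 : eps ≤ 1/4 := le_trans heps2 h1n2
      have hneps : (n:ℝ)*eps ≤ 1/2 := by
        calc (n:ℝ)*eps ≤ n*((1/n)^2) := mul_le_mul_of_nonneg_left heps2 hnR.le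
        _ = 1/n := by field_simp
        _ ≤ 1/2 := h12
      have heps0 : 0 ≤ eps := by rw [heps]; positivity
      have hlam_pos : 0 < lam := by rw [hlam]; linarith
      have hlam_le1 : lam ≤ 1 := by rw [hlam]; linarith
      have hBern : ∀ m : ℕ, 1 - (m:ℝ)*eps ≤ lam^m := by
        intro m
        have h := one_add_mul_le_pow (a := -eps) (by linarith) m
        have h2 : (1:ℝ) + -eps = lam := by rw [hlam, heps]; ring
        rw [h2] at h
        linarith
      have hlb_le : 1 - (n:ℝ)*((1:ℝ)/n)^(n*B) ≤ lam^n := by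
        rw [heps_eq]
        exact hBern n
      have hlb0 : 0 ≤ 1 - (n:ℝ)*((1:ℝ)/n)^(n*B) := lambda_b_nonneg hn hB
      -- nat/real exponent inequality
      have hBpos : 0 < B := hB
      obtain ⟨K, hK⟩ : ∃ x, (k+1)/B = x := ⟨_, rfl⟩
      obtain ⟨w0, hw0⟩ : ∃ x, (t+B-1)/B = x := ⟨_, rfl⟩
      rw [hK, hw0] at hlen
      obtain ⟨M, hM⟩ : ∃ x, (K - w0)/n = x := ⟨_, rfl⟩
      rw [hM] at hlen
      have NK2 : k+1 < (K+1)*B := by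
        rw [← hK]
        exact (Nat.div_lt_iff_lt_mul hBpos).1 (Nat.lt_succ_self _)
      have Nw1 : w0*B ≤ t+B-1 := by
        rw [← hw0]
        exact Nat.div_mul_le_self _ _
      have NM : n*M + (K-w0)%n = K - w0 := by
        rw [← hM]
        exact Nat.div_add_mod _ _
      have NM2 : (K-w0)%n < n := Nat.mod_lt _ hn
      have h1nat : K - w0 + 1 ≤ n*M + n := by omega
      have hsub : K ≤ (K - w0) + w0 := by omega
      have P1 : B*(K - w0 + 1) ≤ B*(n*M + n) := Nat.mul_le_mul_left B h1nat
      have P2 : B*K ≤ B*((K - w0) + w0) := Nat.mul_le_mul_left B hsub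
      have P4 : w0*B + 1 ≤ t + B := by omega
      have r1 : (B:ℝ)*((↑(K - w0):ℝ) + 1) ≤ B*((n:ℝ)*M + n) := by exact_mod_cast P1
      have r2 : (B:ℝ)*K ≤ B*((↑(K - w0):ℝ) + w0) := by exact_mod_cast P2
      have r3 : (k:ℝ)+1 < ((K:ℝ)+1)*B := by exact_mod_cast NK2
      have r4 : (w0:ℝ)*B + 1 ≤ t + B := by exact_mod_cast P4
      have hdiv : ((k:ℝ) - t)/B ≤ (n:ℝ)*M + ((n:ℝ)+1) := by
        rw [div_le_iff₀ hBR]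
        linarith only [r1, r2, r3, r4]
      have hMexp : ((k:ℝ) - t)/B - ((n:ℝ)+1) ≤ ((n*M : ℕ):ℝ) := by
        push_cast
        linarith only [hdiv]
      have h5 : (1:ℝ)/2 ≤ lam^n := by
        have := hBern n
        linarith
      have h6 : (3:ℝ)/4 ≤ lam := by rw [hlam]; linarith
      have h14 : (1:ℝ)/4 ≤ lam^(n+1) := by
        calc (1:ℝ)/4 ≤ (1/2)*(3/4) := by norm_num
        _ ≤ lam^n * lam := mul_le_mul h5 h6 (by norm_num) (le_trans (by norm_num) h5)
        _ = lam^(n+1) := (pow_succ lam n).symm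
      have hrpow_nn : (0:ℝ) ≤ lam ^ (((k:ℝ) - t)/B) := Real.rpow_nonneg hlam_pos.le _
      calc |prodA A t (k - t) i j - φ k i| ≤ hi - lo := habs
      _ ≤ (1 - (n:ℝ)*((1:ℝ)/n)^(n*B))^M := hlen
      _ ≤ (lam^n)^M := pow_le_pow_left₀ hlb0 hlb_le M
      _ = lam^(n*M) := (pow_mul lam n M).symm
      _ = lam ^ (((n*M : ℕ):ℝ)) := (Real.rpow_natCast lam (n*M)).symm
      _ ≤ lam ^ (((k:ℝ) - t)/B - ((n:ℝ)+1)) :=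
          Real.rpow_le_rpow_of_exponent_ge hlam_pos hlam_le1 hMexp
      _ = lam ^ (((k:ℝ) - t)/B) / lam ^ ((n:ℝ)+1) := Real.rpow_sub hlam_pos _ _
      _ = lam ^ (((k:ℝ) - t)/B) / lam ^ (n+1) := by
          rw [show ((n:ℝ)+1) = ((n+1:ℕ):ℝ) by push_cast; ring, Real.rpow_natCast]
      _ ≤ lam ^ (((k:ℝ) - t)/B) / (1/4) :=
          div_le_div_of_nonneg_left hrpow_nn (by norm_num) h14
      _ = 4 * lam ^ (((k:ℝ) - t)/B) := by ring
  · -- lower bound by δ/n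
    intro k j
    have hnonneg : ∀ k' (i : Fin n), 0 ≤ (prodA A 0 k' *ᵥ fun _ => (1:ℝ)) i := by
      intro k' i
      rw [hmv]
      exact Finset.sum_nonneg fun l _ => (CS_prodLen hAcs 0 (k'+1)).1 i l
    have hinner : ∀ k', BddBelow (Set.range fun i : Fin n =>
        (prodA A 0 k' *ᵥ fun _ => (1:ℝ)) i) :=
      fun k' => Set.Finite.bddBelow (Set.finite_range _)
    have houter : BddBelow (Set.range fun k' : ℕ =>
        ⨅ i : Fin n, (prodA A 0 k' *ᵥ fun _ => (1:ℝ)) i) := by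
      refine ⟨0, ?_⟩
      rintro x ⟨k', rfl⟩
      exact le_ciInf fun i => hnonneg k' i
    have hδle : δ ≤ (prodA A 0 k *ᵥ fun _ => (1:ℝ)) j := by
      rw [hδ]
      exact le_trans (ciInf_le houter k) (ciInf_le (hinner k) j)
    rw [hmv] at hδle
    have hφeq : φ k j = (∑ l, prodLen A 0 (k+1) j l) / n := by
      simp only [hφdef]
      ring
    rw [ge_iff_le, hφeq]
    gcongr
end

section
/- (Lemma 3, convergence rate over B-strongly connected graphs.) Let {G_k}_{k≥0} be a B-strongly connected sequence of directed graphs on n nodes, each containing all self-loops, with associated column-stochastic weight matrices {A_k}. Let θ ∈ ℝ^n, τ^1,…,τ^n > 0, θ* = (Σ_i τ^i θ^i)/(Σ_j τ^j), y_0 ∈ ℝ^n, and define the expected mean process τ_0 = τ, τ_{k+1} = A_k τ_k + τ, y_{k+1}^i = (Σ_j [A_k]_{ij} τ_k^j y_k^j + θ^i τ^i)/τ_{k+1}^i. Then there exists a constant K ≥ 0 such that |y_k^i − θ*| ≤ K/k for all k ≥ 1 and all i; in particular, y_k^i → θ* for every i. -/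
open Finset Matrix

/-- Precision recursion of algorithm (5a): `τ_0 = τ`, `τ_{k+1} = A_k τ_k + τ`. -/
noncomputable def tauSeq {n : ℕ} (A : ℕ → Matrix (Fin n) (Fin n) ℝ) (τ : Fin n → ℝ) :
    ℕ → Fin n → ℝ
  | 0 => τ
  | k + 1 => A k *ᵥ tauSeq A τ k + τ

/-- Mean recursion of algorithm (5b):
`θ_{k+1}^i = (Σ_j [A_k]_{ij} τ_k^j θ_k^j + s_{k+1}^i τ^i) / τ_{k+1}^i`. -/
noncomputable def thetaSeq {n : ℕ} (A : ℕ → Matrix (Fin n) (Fin n) ℝ) (τ : Fin n → ℝ)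
    (θ0 : Fin n → ℝ) (s : ℕ → Fin n → ℝ) : ℕ → Fin n → ℝ
  | 0 => θ0
  | k + 1 => fun i =>
      ((∑ j, A k i j * tauSeq A τ k j * thetaSeq A τ θ0 s k j) + s (k + 1) i * τ i) /
        tauSeq A τ (k + 1) i

/-- The linear recursion `x_{k+1} = A_k x_k + c`. -/
noncomputable def linSeq {n : ℕ} (A : ℕ → Matrix (Fin n) (Fin n) ℝ) (x0 c : Fin n → ℝ) :
    ℕ → Fin n → ℝ
  | 0 => x0
  | k + 1 => A k *ᵥ linSeq A x0 c k + c

/- ===== auxiliary lemmas ===== -/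

section AuxWM
variable {n : ℕ}

lemma wm_nonneg (E : Finset (Fin n × Fin n)) (i j : Fin n) : 0 ≤ weightMatrix E i j := by
  unfold weightMatrix
  simp only [Matrix.of_apply]
  split <;> positivity

lemma outDeg_succ_le (E : Finset (Fin n × Fin n)) (j : Fin n) : outDeg E j + 1 ≤ n := by
  have h : (Finset.univ.filter fun i => (j, i) ∈ E ∧ i ≠ j) ⊆ Finset.univ.erase j := by
    intro i hi
    simp only [mem_filter] at hi
    exact Finset.mem_erase.mpr ⟨hi.2.2, Finset.mem_univ i⟩
  have := Finset.card_le_card h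
  have hc : (Finset.univ.erase j).card = n - 1 := by
    rw [Finset.card_erase_of_mem (Finset.mem_univ j)]
    simp
  have hn : 1 ≤ n := Nat.one_le_iff_ne_zero.mpr (by
    rintro rfl; exact absurd j.2 (by omega))
  unfold outDeg
  omega

lemma wm_lb (E : Finset (Fin n × Fin n)) (i j : Fin n) (h : (j, i) ∈ E) :
    (1 : ℝ) / n ≤ weightMatrix E i j := by
  unfold weightMatrix
  simp only [Matrix.of_apply, if_pos h]
  apply div_le_div_of_nonneg_left (by norm_num) (by positivity)
  exact_mod_cast outDeg_succ_le E j

lemma wm_pos (E : Finset (Fin n × Fin n)) (i j : Fin n) (h : (j, i) ∈ E) :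
    0 < weightMatrix E i j := by
  have h1 : (0:ℝ) < 1/n := by
    have := outDeg_succ_le E j
    have : 0 < n := by omega
    positivity
  exact lt_of_lt_of_le h1 (wm_lb E i j h)

lemma wm_eq_zero (E : Finset (Fin n × Fin n)) (i j : Fin n) (h : (j, i) ∉ E) :
    weightMatrix E i j = 0 := by
  unfold weightMatrix
  simp [h]

lemma wm_colsum (E : Finset (Fin n × Fin n)) (j : Fin n) (hloop : (j, j) ∈ E) :
    ∑ i, weightMatrix E i j = 1 := by
  unfold weightMatrix
  simp only [Matrix.of_apply]
  rw [← Finset.sum_filter]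
  have hcard : (Finset.univ.filter fun i => (j, i) ∈ E).card = outDeg E j + 1 := by
    have : (Finset.univ.filter fun i => (j, i) ∈ E)
        = insert j (Finset.univ.filter fun i => (j, i) ∈ E ∧ i ≠ j) := by
      ext i
      simp only [mem_filter, mem_insert, Finset.mem_univ, true_and]
      constructor
      · intro hi
        by_cases h : i = j
        · exact Or.inl h
        · exact Or.inr ⟨hi, h⟩
      · rintro (rfl | ⟨h1, _⟩)
        · exact hloop
        · exact h1
    rw [this, Finset.card_insert_of_notMem (by simp), outDeg]
  rw [Finset.sum_const, hcard]
  have : (0:ℝ) < (outDeg E j : ℝ) + 1 := by positivity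
  rw [nsmul_eq_mul, Nat.cast_add, Nat.cast_one]; exact mul_one_div_cancel (ne_of_gt this)

/- norm1 and matrix-vector basics -/

noncomputable def norm1 {n : ℕ} (x : Fin n → ℝ) : ℝ := ∑ i, |x i|

lemma mulVec_apply' (M : Matrix (Fin n) (Fin n) ℝ) (x : Fin n → ℝ) (i : Fin n) :
    (M *ᵥ x) i = ∑ j, M i j * x j := rfl

lemma norm1_nonneg (x : Fin n → ℝ) : 0 ≤ norm1 x :=
  Finset.sum_nonneg fun i _ => abs_nonneg _

lemma abs_le_norm1 (x : Fin n → ℝ) (i : Fin n) : |x i| ≤ norm1 x :=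
  Finset.single_le_sum (fun j _ => abs_nonneg (x j)) (Finset.mem_univ i)

lemma norm1_add_le (x y : Fin n → ℝ) : norm1 (x + y) ≤ norm1 x + norm1 y := by
  rw [norm1, norm1, norm1, ← Finset.sum_add_distrib]
  exact Finset.sum_le_sum fun i _ => abs_add_le _ _

lemma norm1_mulVec_le (M : Matrix (Fin n) (Fin n) ℝ) (x : Fin n → ℝ)
    (hM : ∀ i j, 0 ≤ M i j) (hcol : ∀ j, ∑ i, M i j = 1) :
    norm1 (M *ᵥ x) ≤ norm1 x := by
  unfold norm1
  have h1 : ∀ i, |(M *ᵥ x) i| ≤ ∑ j, M i j * |x j| := by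
    intro i
    rw [Matrix.mulVec, dotProduct]
    refine (Finset.abs_sum_le_sum_abs _ _).trans ?_
    exact Finset.sum_le_sum fun j _ => by rw [abs_mul, abs_of_nonneg (hM i j)]
  calc ∑ i, |(M *ᵥ x) i| ≤ ∑ i, ∑ j, M i j * |x j| := Finset.sum_le_sum fun i _ => h1 i
    _ = ∑ j, (∑ i, M i j) * |x j| := by rw [Finset.sum_comm]; simp [Finset.sum_mul]
    _ = ∑ j, |x j| := by simp [hcol]

lemma sum_mulVec (M : Matrix (Fin n) (Fin n) ℝ) (x : Fin n → ℝ)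
    (hcol : ∀ j, ∑ i, M i j = 1) : ∑ i, (M *ᵥ x) i = ∑ j, x j := by
  simp only [Matrix.mulVec, dotProduct]
  rw [Finset.sum_comm]
  simp [← Finset.sum_mul, hcol]

lemma contraction (M : Matrix (Fin n) (Fin n) ℝ) (x : Fin n → ℝ) (δ : ℝ)
    (hM : ∀ i j, δ ≤ M i j) (hcol : ∀ j, ∑ i, M i j = 1) (hx : ∑ j, x j = 0) :
    norm1 (M *ᵥ x) ≤ (1 - n * δ) * norm1 x := by
  have key : ∀ i, (M *ᵥ x) i = ∑ j, (M i j - δ) * x j := by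
    intro i
    rw [Matrix.mulVec, dotProduct]
    simp only [sub_mul]
    rw [Finset.sum_sub_distrib, ← Finset.mul_sum, hx, mul_zero, sub_zero]
  unfold norm1
  have h1 : ∀ i, |(M *ᵥ x) i| ≤ ∑ j, (M i j - δ) * |x j| := by
    intro i
    rw [key i]
    refine (Finset.abs_sum_le_sum_abs _ _).trans ?_
    exact Finset.sum_le_sum fun j _ => by
      rw [abs_mul, abs_of_nonneg (by linarith [hM i j])]
  calc ∑ i, |(M *ᵥ x) i| ≤ ∑ i, ∑ j, (M i j - δ) * |x j| :=
        Finset.sum_le_sum fun i _ => h1 i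
    _ = ∑ j, (1 - n * δ) * |x j| := by
        rw [Finset.sum_comm]
        apply Finset.sum_congr rfl
        intro j _
        rw [← Finset.sum_mul, Finset.sum_sub_distrib, hcol j, Finset.sum_const,
          Finset.card_univ, Fintype.card_fin, nsmul_eq_mul]
    _ = (1 - n * δ) * ∑ j, |x j| := by rw [Finset.mul_sum]

/- prodA basics -/

lemma prodA_nonneg (A : ℕ → Matrix (Fin n) (Fin n) ℝ)
    (hA : ∀ k i j, 0 ≤ A k i j) (t m : ℕ) (i j : Fin n) : 0 ≤ prodA A t m i j := by
  induction m generalizing i j with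
  | zero => exact hA t i j
  | succ m ih =>
    show 0 ≤ (A (t + m + 1) * prodA A t m) i j
    rw [Matrix.mul_apply]
    exact Finset.sum_nonneg fun l _ => mul_nonneg (hA _ i l) (ih l j)

lemma prodA_colsum (A : ℕ → Matrix (Fin n) (Fin n) ℝ)
    (hcol : ∀ k j, ∑ i, A k i j = 1) (t m : ℕ) (j : Fin n) :
    ∑ i, prodA A t m i j = 1 := by
  induction m with
  | zero => exact hcol t j
  | succ m ih =>
    show ∑ i, (A (t + m + 1) * prodA A t m) i j = 1
    simp only [Matrix.mul_apply]
    rw [Finset.sum_comm]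
    simp only [← Finset.sum_mul, hcol, one_mul]
    exact ih

lemma prodA_split (A : ℕ → Matrix (Fin n) (Fin n) ℝ) (t b m : ℕ) :
    prodA A t (b + m + 1) = prodA A (t + b + 1) m * prodA A t b := by
  induction m with
  | zero => rfl
  | succ m ih =>
    show A (t + (b + m + 1) + 1) * prodA A t (b + m + 1) = _
    rw [ih]
    show _ = (A (t + b + 1 + m + 1) * prodA A (t + b + 1) m) * prodA A t b
    have h : t + (b + m + 1) + 1 = t + b + 1 + m + 1 := by omega
    rw [h, Matrix.mul_assoc]

lemma prodA_entry_lb (A : ℕ → Matrix (Fin n) (Fin n) ℝ) (d : ℝ) (hd : 0 ≤ d)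
    (hA : ∀ k i j, 0 ≤ A k i j) (hlb : ∀ k i j, 0 < A k i j → d ≤ A k i j)
    (t m : ℕ) (i j : Fin n) (h : 0 < prodA A t m i j) :
    d ^ (m + 1) ≤ prodA A t m i j := by
  induction m generalizing i j with
  | zero => simpa [prodA] using hlb t i j h
  | succ m ih =>
    have hexp : (prodA A t (m+1)) i j = ∑ l, A (t + m + 1) i l * prodA A t m l j :=
      Matrix.mul_apply
    rw [hexp] at h ⊢
    obtain ⟨l, -, hl⟩ : ∃ l ∈ Finset.univ, 0 < A (t + m + 1) i l * prodA A t m l j := by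
      by_contra hcon
      push_neg at hcon
      have : ∑ l, A (t + m + 1) i l * prodA A t m l j ≤ 0 :=
        Finset.sum_nonpos fun l hlm => hcon l hlm
      linarith
    have hApos : 0 < A (t + m + 1) i l := by
      rcases lt_or_eq_of_le (hA (t+m+1) i l) with h' | h'
      · exact h'
      · rw [← h'] at hl; simp at hl
    have hPpos : 0 < prodA A t m l j := by
      rcases lt_or_eq_of_le (prodA_nonneg A hA t m l j) with h' | h'
      · exact h'
      · rw [← h'] at hl; simp at hl
    calc d ^ (m + 2) = d * d ^ (m + 1) := by ring
      _ ≤ A (t + m + 1) i l * prodA A t m l j :=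
          mul_le_mul (hlb _ i l hApos) (ih l j hPpos) (by positivity) (hA _ i l)
      _ ≤ ∑ l', A (t + m + 1) i l' * prodA A t m l' j :=
          Finset.single_le_sum (fun l' _ => mul_nonneg (hA _ i l') (prodA_nonneg A hA t m l' j))
            (Finset.mem_univ l)

lemma norm1_sub_add (u v : Fin n → ℝ) : norm1 u ≤ norm1 (fun i => u i - v i) + norm1 v := by
  have h := norm1_add_le (fun i => u i - v i) v
  have heq : (fun i => u i - v i) + v = u := by
    funext i
    show u i - v i + v i = u i
    ring
  rwa [heq] at h

end AuxWM

lemma A_nonneg {n : ℕ} (E : ℕ → Finset (Fin n × Fin n))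
    (A : ℕ → Matrix (Fin n) (Fin n) ℝ) (hA : ∀ k, A k = weightMatrix (E k)) :
    ∀ k i j, 0 ≤ A k i j := fun k i j => by rw [hA]; exact wm_nonneg _ i j

lemma A_pos_of_edge {n : ℕ} (E : ℕ → Finset (Fin n × Fin n))
    (A : ℕ → Matrix (Fin n) (Fin n) ℝ) (hA : ∀ k, A k = weightMatrix (E k))
    (k : ℕ) (i j : Fin n) (h : (j, i) ∈ E k) : 0 < A k i j := by
  rw [hA]; exact wm_pos _ i j h

lemma A_lb {n : ℕ} (E : ℕ → Finset (Fin n × Fin n))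
    (A : ℕ → Matrix (Fin n) (Fin n) ℝ) (hA : ∀ k, A k = weightMatrix (E k)) :
    ∀ k i j, 0 < A k i j → (1 : ℝ) / n ≤ A k i j := by
  intro k i j h
  rw [hA] at h ⊢
  by_cases he : (j, i) ∈ E k
  · exact wm_lb _ i j he
  · rw [wm_eq_zero _ i j he] at h; exact absurd h (lt_irrefl 0)

section Pos
variable {n B : ℕ}
  (E : ℕ → Finset (Fin n × Fin n)) (hloop : ∀ k i, (i, i) ∈ E k)
  (A : ℕ → Matrix (Fin n) (Fin n) ℝ) (hA : ∀ k, A k = weightMatrix (E k))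

include hA hloop
set_option linter.unusedSectionVars false

lemma prodA_pos_mono (t m : ℕ) (i j : Fin n) (h : 0 < prodA A t m i j) :
    0 < prodA A t (m + 1) i j := by
  have hexp : prodA A t (m + 1) i j = ∑ l, A (t + m + 1) i l * prodA A t m l j :=
    Matrix.mul_apply
  rw [hexp]
  have hterm : 0 < A (t + m + 1) i i * prodA A t m i j :=
    mul_pos (A_pos_of_edge E A hA _ i i (hloop _ i)) h
  refine lt_of_lt_of_le hterm ?_
  exact Finset.single_le_sum
    (fun l _ => mul_nonneg (A_nonneg E A hA _ i l)
      (prodA_nonneg A (A_nonneg E A hA) t m l j)) (Finset.mem_univ i)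

lemma prodA_pos_le (t : ℕ) {m m' : ℕ} (hm : m ≤ m') (i j : Fin n)
    (h : 0 < prodA A t m i j) : 0 < prodA A t m' i j := by
  induction m' , hm using Nat.le_induction with
  | base => exact h
  | succ m' hm ih => exact prodA_pos_mono E hloop A hA t m' i j ih

lemma prodA_pos_step (t m : ℕ) (i j l : Fin n) (hedge : (l, i) ∈ E (t + m + 1))
    (h : 0 < prodA A t m l j) : 0 < prodA A t (m + 1) i j := by
  have hexp : prodA A t (m + 1) i j = ∑ l', A (t + m + 1) i l' * prodA A t m l' j :=
    Matrix.mul_apply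
  rw [hexp]
  have hterm : 0 < A (t + m + 1) i l * prodA A t m l j :=
    mul_pos (A_pos_of_edge E A hA _ i l hedge) h
  refine lt_of_lt_of_le hterm ?_
  exact Finset.single_le_sum
    (fun l' _ => mul_nonneg (A_nonneg E A hA _ i l')
      (prodA_nonneg A (A_nonneg E A hA) t m l' j)) (Finset.mem_univ l)

lemma prodA_diag_pos (t m : ℕ) (j : Fin n) : 0 < prodA A t m j j := by
  apply prodA_pos_le E hloop A hA t (Nat.zero_le m)
  exact A_pos_of_edge E A hA t j j (hloop t j)

lemma window_growth (hconn : BStronglyConnected E B) (t : ℕ) (j : Fin n) (k m m' : ℕ)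
    (h1 : t + m + 1 ≤ k * B) (h2 : (k + 1) * B ≤ t + m' + 1) (hm : m ≤ m') :
    (∀ i, 0 < prodA A t m' i j) ∨
    (Finset.univ.filter fun i => 0 < prodA A t m i j).card <
      (Finset.univ.filter fun i => 0 < prodA A t m' i j).card := by
  set S := Finset.univ.filter fun i => 0 < prodA A t m i j with hS
  set S' := Finset.univ.filter fun i => 0 < prodA A t m' i j with hS'
  have hsub : S ⊆ S' := by
    intro i hi
    simp only [hS, hS', mem_filter, Finset.mem_univ, true_and] at hi ⊢
    exact prodA_pos_le E hloop A hA t hm i j hi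
  by_cases huniv : S' = Finset.univ
  · left
    intro i
    have : i ∈ S' := huniv ▸ Finset.mem_univ i
    simpa [hS'] using this
  · right
    by_contra hcard
    push_neg at hcard
    have heq : S = S' := Finset.eq_of_subset_of_card_le hsub hcard
    obtain ⟨b, hb⟩ : ∃ b, b ∉ S' := by
      by_contra hall
      push_neg at hall
      exact huniv (Finset.eq_univ_of_forall hall)
    have hclaim : ∀ x : Fin n,
        Relation.ReflTransGen
          (fun a b => (a, b) ∈ (Finset.Ico (k * B) ((k + 1) * B)).biUnion E) j x →
        x ∈ S' := by
      intro x hx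
      induction hx with
      | refl =>
        rw [← heq]
        simp only [hS, mem_filter, Finset.mem_univ, true_and]
        exact prodA_diag_pos E hloop A hA t m j
      | @tail a c hab hbc ih =>
        obtain ⟨s, hs, hedge⟩ := Finset.mem_biUnion.mp hbc
        rw [Finset.mem_Ico] at hs
        have hst : t + m + 1 ≤ s := le_trans h1 hs.1
        have ha : 0 < prodA A t (s - t - 1) a j := by
          have haS : a ∈ S := heq ▸ ih
          simp only [hS, mem_filter, Finset.mem_univ, true_and] at haS
          exact prodA_pos_le E hloop A hA t (by omega) a j haS
        have hc : 0 < prodA A t (s - t) c j := by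
          have hidx : t + (s - t - 1) + 1 = s := by omega
          have := prodA_pos_step E hloop A hA t (s - t - 1) c j a (by rw [hidx]; exact hedge) ha
          have hidx2 : s - t - 1 + 1 = s - t := by omega
          rwa [hidx2] at this
        simp only [hS', mem_filter, Finset.mem_univ, true_and]
        exact prodA_pos_le E hloop A hA t (show s - t ≤ m' by omega) c j hc
    exact hb (hclaim b (hconn k j b))

lemma prodA_all_pos (hB : 1 ≤ B) (hconn : BStronglyConnected E B) (t m : ℕ)
    (hm : (n + 1) * B - 1 ≤ m) (i j : Fin n) : 0 < prodA A t m i j := by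
  set k0 := (t + B) / B with hk0
  have hdm := Nat.div_add_mod (t + B) B
  rw [← hk0] at hdm
  have hmod : (t + B) % B < B := Nat.mod_lt _ (by omega)
  have hcomm : k0 * B = B * k0 := Nat.mul_comm _ _
  have hk0a : t + 1 ≤ k0 * B := by omega
  have hk0b : k0 * B ≤ t + B := by omega
  have claim : ∀ r m₁, (k0 + r) * B ≤ t + m₁ + 1 →
      (∀ i', 0 < prodA A t m₁ i' j) ∨
      r + 1 ≤ (Finset.univ.filter fun i' => 0 < prodA A t m₁ i' j).card := by
    intro r
    induction r with
    | zero =>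
      intro m₁ _
      right
      have hj : j ∈ Finset.univ.filter fun i' => 0 < prodA A t m₁ i' j := by
        simp only [mem_filter, Finset.mem_univ, true_and]
        exact prodA_diag_pos E hloop A hA t m₁ j
      have := Finset.card_pos.mpr ⟨j, hj⟩
      omega
    | succ r ih =>
      intro m₁ hcond
      have hmul1 : k0 * B ≤ (k0 + r) * B := Nat.mul_le_mul_right _ (by omega)
      have hmul2 : (k0 + r) * B + B = (k0 + r + 1) * B := by ring
      have hmul3 : (k0 + (r + 1)) * B = (k0 + r) * B + B := by ring
      set m₀ := (k0 + r) * B - t - 1 with hm₀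
      have h₀ : t + m₀ + 1 = (k0 + r) * B := by omega
      have hm₀le : m₀ ≤ m₁ := by omega
      rcases ih m₀ (le_of_eq h₀.symm) with hpos | hcard
      · left
        intro i'
        exact prodA_pos_le E hloop A hA t hm₀le i' j (hpos i')
      · rcases window_growth E hloop A hA hconn t j (k0 + r) m₀ m₁
          (le_of_eq h₀) (by omega) hm₀le with hpos | hlt
        · exact Or.inl hpos
        · right; omega
  have e1 : (k0 + (n - 1)) * B = k0 * B + (n - 1) * B := by ring
  have e2 : (n - 1) * B + B = n * B := by
    have h : n - 1 + 1 = n := by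
      have : 0 < n := Fin.pos j
      omega
    calc (n - 1) * B + B = (n - 1 + 1) * B := by ring
      _ = n * B := by rw [h]
  have e3 : (n + 1) * B = n * B + B := by ring
  rcases claim (n - 1) m (by omega) with hpos | hcard
  · exact hpos i
  · have hn : 0 < n := Fin.pos j
    have huniv : (Finset.univ.filter fun i' => 0 < prodA A t m i' j) = Finset.univ := by
      apply Finset.eq_univ_of_card
      have hle := Finset.card_filter_le (Finset.univ : Finset (Fin n))
        (fun i' => 0 < prodA A t m i' j)
      simp only [Finset.card_univ, Fintype.card_fin] at hle ⊢
      omega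
    have hi := Finset.mem_univ i
    rw [← huniv] at hi
    simpa using hi

lemma prodA_delta (hn : 1 ≤ n) (hB : 1 ≤ B) (hconn : BStronglyConnected E B)
    (t m : ℕ) (hm : (n + 1) * B - 1 ≤ m) (i j : Fin n) :
    ((1:ℝ)/n) ^ ((n + 1) * B) ≤ prodA A t m i j := by
  set L := (n + 1) * B with hL
  have hL1 : 1 ≤ L := by
    have : 1 * 1 ≤ (n + 1) * B := Nat.mul_le_mul (by omega) hB
    omega
  have hd0 : (0:ℝ) ≤ 1/n := by positivity
  have exact_case : ∀ t' i' j', ((1:ℝ)/n) ^ L ≤ prodA A t' (L - 1) i' j' := by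
    intro t' i' j'
    have hpos := prodA_all_pos E hloop A hA hB hconn t' (L - 1) (by omega) i' j'
    have hlb := prodA_entry_lb A ((1:ℝ)/n) hd0 (A_nonneg E A hA) (A_lb E A hA) t' (L - 1) i' j' hpos
    have : L - 1 + 1 = L := by omega
    rwa [this] at hlb
  rcases Nat.lt_or_ge m L with hcase | hcase
  · have : m = L - 1 := by omega
    rw [this]
    exact exact_case t i j
  · have hsp := prodA_split A t (m - L) (L - 1)
    have hidx : m - L + (L - 1) + 1 = m := by omega
    rw [hidx] at hsp
    rw [hsp, Matrix.mul_apply]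
    have hrest_nn : ∀ l, 0 ≤ prodA A t (m - L) l j :=
      fun l => prodA_nonneg A (A_nonneg E A hA) t (m - L) l j
    have hrest_cs : ∑ l, prodA A t (m - L) l j = 1 :=
      prodA_colsum A (fun k j' => by rw [hA]; exact wm_colsum (E k) j' (hloop k j')) t (m - L) j
    calc ((1:ℝ)/n) ^ L = ((1:ℝ)/n) ^ L * ∑ l, prodA A t (m - L) l j := by rw [hrest_cs, mul_one]
      _ = ∑ l, ((1:ℝ)/n) ^ L * prodA A t (m - L) l j := by rw [Finset.mul_sum]
      _ ≤ ∑ l, prodA A (t + (m - L) + 1) (L - 1) i l * prodA A t (m - L) l j :=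
          Finset.sum_le_sum fun l _ =>
            mul_le_mul_of_nonneg_right (exact_case _ i l) (hrest_nn l)

end Pos

section TauE
variable {n : ℕ} (A : ℕ → Matrix (Fin n) (Fin n) ℝ)
  (hAnn : ∀ k i j, 0 ≤ A k i j) (hcol : ∀ k j, ∑ i, A k i j = 1)

include hAnn hcol
set_option linter.unusedSectionVars false

lemma tau_nonneg (τ : Fin n → ℝ) (hτ : ∀ i, 0 ≤ τ i) : ∀ k i, 0 ≤ tauSeq A τ k i := by
  intro k
  induction k with
  | zero => exact hτ
  | succ k ih =>
    intro i
    show 0 ≤ (A k *ᵥ tauSeq A τ k) i + τ i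
    have : 0 ≤ (A k *ᵥ tauSeq A τ k) i := by
      rw [mulVec_apply']
      exact Finset.sum_nonneg fun j _ => mul_nonneg (hAnn k i j) (ih j)
    linarith [hτ i]

lemma tau_ge (τ : Fin n → ℝ) (hτ : ∀ i, 0 ≤ τ i) : ∀ k i, τ i ≤ tauSeq A τ k i := by
  intro k i
  cases k with
  | zero => exact le_refl _
  | succ k =>
    show τ i ≤ (A k *ᵥ tauSeq A τ k) i + τ i
    have : 0 ≤ (A k *ᵥ tauSeq A τ k) i := by
      rw [mulVec_apply']
      exact Finset.sum_nonneg fun j _ =>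
        mul_nonneg (hAnn k i j) (tau_nonneg A hAnn hcol τ hτ k j)
    linarith

lemma tau_formula (τ : Fin n → ℝ) :
    ∀ k i, tauSeq A τ k i = τ i + ∑ s ∈ Finset.range k, (prodA A s (k - 1 - s) *ᵥ τ) i := by
  intro k
  induction k with
  | zero => intro i; simp [tauSeq]
  | succ k ih =>
    intro i
    have h1 : tauSeq A τ (k + 1) i = (∑ j, A k i j * tauSeq A τ k j) + τ i := rfl
    rw [h1]
    have hstep : ∀ s, s < k →
        (∑ j, A k i j * (prodA A s (k - 1 - s) *ᵥ τ) j) = (prodA A s (k - s) *ᵥ τ) i := by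
      intro s hs
      have hmm : (A k *ᵥ (prodA A s (k - 1 - s) *ᵥ τ)) i
          = ((A k * prodA A s (k - 1 - s)) *ᵥ τ) i := by
        rw [Matrix.mulVec_mulVec]
      have hAP : A k * prodA A s (k - 1 - s) = prodA A s (k - s) := by
        have h2 : k - s = (k - 1 - s) + 1 := by omega
        rw [h2]
        show _ = A (s + (k - 1 - s) + 1) * prodA A s (k - 1 - s)
        have h3 : s + (k - 1 - s) + 1 = k := by omega
        rw [h3]
      calc (∑ j, A k i j * (prodA A s (k - 1 - s) *ᵥ τ) j)
          = (A k *ᵥ (prodA A s (k - 1 - s) *ᵥ τ)) i := rfl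
        _ = ((A k * prodA A s (k - 1 - s)) *ᵥ τ) i := hmm
        _ = (prodA A s (k - s) *ᵥ τ) i := by rw [hAP]
    calc (∑ j, A k i j * tauSeq A τ k j) + τ i
        = (∑ j, (A k i j * τ j
            + ∑ s ∈ Finset.range k, A k i j * (prodA A s (k - 1 - s) *ᵥ τ) j)) + τ i := by
          congr 1
          apply Finset.sum_congr rfl
          intro j _
          rw [ih j, mul_add, Finset.mul_sum]
      _ = ((∑ j, A k i j * τ j)
            + ∑ j, ∑ s ∈ Finset.range k, A k i j * (prodA A s (k - 1 - s) *ᵥ τ) j) + τ i := by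
          rw [Finset.sum_add_distrib]
      _ = ((prodA A k 0 *ᵥ τ) i
            + ∑ s ∈ Finset.range k, ∑ j, A k i j * (prodA A s (k - 1 - s) *ᵥ τ) j) + τ i := by
          rw [Finset.sum_comm]
          rfl
      _ = ((prodA A k 0 *ᵥ τ) i + ∑ s ∈ Finset.range k, (prodA A s (k - s) *ᵥ τ) i) + τ i := by
          have hsc : ∑ s ∈ Finset.range k, (∑ j, A k i j * (prodA A s (k - 1 - s) *ᵥ τ) j)
              = ∑ s ∈ Finset.range k, (prodA A s (k - s) *ᵥ τ) i :=
            Finset.sum_congr rfl fun s hs => hstep s (Finset.mem_range.mp hs)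
          rw [hsc]
      _ = τ i + ∑ s ∈ Finset.range (k + 1), (prodA A s (k + 1 - 1 - s) *ᵥ τ) i := by
          rw [Finset.sum_range_succ]
          simp only [Nat.add_sub_cancel, Nat.add_sub_cancel_left, Nat.sub_self]
          ring

lemma linSeq_sum_zero (x0 c : Fin n → ℝ) (hx0 : ∑ i, x0 i = 0) (hc : ∑ i, c i = 0) :
    ∀ k, ∑ i, linSeq A x0 c k i = 0 := by
  intro k
  induction k with
  | zero => exact hx0
  | succ k ih =>
    show ∑ i, ((A k *ᵥ linSeq A x0 c k) i + c i) = 0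
    rw [Finset.sum_add_distrib, sum_mulVec (A k) _ (hcol k), ih, hc, add_zero]

lemma linSeq_shift (x0 c : Fin n → ℝ) :
    ∀ m k, norm1 (fun i => linSeq A x0 c (k + m + 1) i - (prodA A k m *ᵥ linSeq A x0 c k) i)
      ≤ (m + 1 : ℝ) * norm1 c := by
  intro m
  induction m with
  | zero =>
    intro k
    have : (fun i => linSeq A x0 c (k + 0 + 1) i - (prodA A k 0 *ᵥ linSeq A x0 c k) i) = c := by
      funext i
      show (A k *ᵥ linSeq A x0 c k) i + c i - (A k *ᵥ linSeq A x0 c k) i = c i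
      ring
    rw [this]
    norm_num
  | succ m ih =>
    intro k
    have hdec : (fun i => linSeq A x0 c (k + (m + 1) + 1) i
        - (prodA A k (m + 1) *ᵥ linSeq A x0 c k) i)
        = (A (k + m + 1) *ᵥ (fun i => linSeq A x0 c (k + m + 1) i
            - (prodA A k m *ᵥ linSeq A x0 c k) i)) + c := by
      funext i
      have h1 : linSeq A x0 c (k + (m + 1) + 1) i
          = (A (k + m + 1) *ᵥ linSeq A x0 c (k + m + 1)) i + c i := rfl
      have h2 : (prodA A k (m + 1) *ᵥ linSeq A x0 c k) i
          = (A (k + m + 1) *ᵥ (prodA A k m *ᵥ linSeq A x0 c k)) i := by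
        show ((A (k + m + 1) * prodA A k m) *ᵥ linSeq A x0 c k) i = _
        rw [Matrix.mulVec_mulVec]
      have h3 : (A (k + m + 1) *ᵥ fun i' => linSeq A x0 c (k + m + 1) i'
          - (prodA A k m *ᵥ linSeq A x0 c k) i') i
          = (A (k + m + 1) *ᵥ linSeq A x0 c (k + m + 1)) i
            - (A (k + m + 1) *ᵥ (prodA A k m *ᵥ linSeq A x0 c k)) i := by
        show ∑ j, A (k + m + 1) i j * (linSeq A x0 c (k + m + 1) j
            - (prodA A k m *ᵥ linSeq A x0 c k) j) = _
        simp only [mul_sub]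
        rw [Finset.sum_sub_distrib]
        rfl
      show linSeq A x0 c (k + (m + 1) + 1) i - (prodA A k (m + 1) *ᵥ linSeq A x0 c k) i
          = (A (k + m + 1) *ᵥ _) i + c i
      rw [h1, h2, h3]
      ring
    rw [hdec]
    calc norm1 _ ≤ norm1 (A (k + m + 1) *ᵥ (fun i => linSeq A x0 c (k + m + 1) i
          - (prodA A k m *ᵥ linSeq A x0 c k) i)) + norm1 c := norm1_add_le _ _
      _ ≤ (norm1 fun i => linSeq A x0 c (k + m + 1) i
          - (prodA A k m *ᵥ linSeq A x0 c k) i) + norm1 c :=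
          add_le_add (norm1_mulVec_le _ _ (hAnn _) (hcol _)) le_rfl
      _ ≤ (m + 1 : ℝ) * norm1 c + norm1 c := add_le_add (ih k) le_rfl
      _ = ((m + 1 : ℕ) + 1 : ℝ) * norm1 c := by push_cast; ring

lemma linSeq_le (c : Fin n → ℝ) : ∀ k, norm1 (linSeq A (0 : Fin n → ℝ) c k) ≤ k * norm1 c := by
  intro k
  cases k with
  | zero =>
    have : linSeq A (0 : Fin n → ℝ) c 0 = 0 := rfl
    rw [this]
    simp [norm1]
  | succ m =>
    have h := linSeq_shift A hAnn hcol (0 : Fin n → ℝ) c m 0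
    have heq : (fun i => linSeq A (0 : Fin n → ℝ) c (0 + m + 1) i
        - (prodA A 0 m *ᵥ linSeq A (0 : Fin n → ℝ) c 0) i)
        = linSeq A (0 : Fin n → ℝ) c (m + 1) := by
      funext i
      have h0 : linSeq A (0 : Fin n → ℝ) c 0 = 0 := rfl
      rw [h0, Matrix.mulVec_zero]
      show linSeq A (0 : Fin n → ℝ) c (0 + m + 1) i - 0 = _
      rw [sub_zero]
      norm_num
    rw [heq] at h
    calc norm1 (linSeq A (0 : Fin n → ℝ) c (m + 1)) ≤ (m + 1 : ℝ) * norm1 c := h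
      _ = ((m + 1 : ℕ) : ℝ) * norm1 c := by push_cast; ring

lemma linSeq_zero_c (x0 : Fin n → ℝ) : ∀ k, norm1 (linSeq A x0 (0 : Fin n → ℝ) k) ≤ norm1 x0 := by
  intro k
  induction k with
  | zero => exact le_refl _
  | succ k ih =>
    have h1 : linSeq A x0 (0 : Fin n → ℝ) (k + 1) = A k *ᵥ linSeq A x0 (0 : Fin n → ℝ) k := by
      show A k *ᵥ linSeq A x0 (0 : Fin n → ℝ) k + 0 = _
      rw [add_zero]
    rw [h1]
    exact le_trans (norm1_mulVec_le _ _ (hAnn k) (hcol k)) ih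

lemma linSeq_contract (c : Fin n → ℝ) (hc : ∑ i, c i = 0) (L : ℕ) (hL : 1 ≤ L) (δ : ℝ)
    (hδpos : 0 < (n : ℝ) * δ) (hδle : (n : ℝ) * δ ≤ 1)
    (hP : ∀ t i j, δ ≤ prodA A t (L - 1) i j) :
    ∀ k, norm1 (linSeq A (0 : Fin n → ℝ) c k) ≤ L * norm1 c / ((n : ℝ) * δ) := by
  intro k
  induction k using Nat.strong_induction_on with
  | _ k ih =>
    have hM : (0 : ℝ) ≤ L * norm1 c := by
      have := norm1_nonneg c
      positivity
    rcases Nat.lt_or_ge k L with hk | hk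
    · calc norm1 (linSeq A (0 : Fin n → ℝ) c k) ≤ k * norm1 c := linSeq_le A hAnn hcol c k
        _ ≤ L * norm1 c := by
            apply mul_le_mul_of_nonneg_right _ (norm1_nonneg c)
            exact_mod_cast le_of_lt hk
        _ ≤ L * norm1 c / ((n : ℝ) * δ) := by
            rw [le_div_iff₀ hδpos]
            exact mul_le_of_le_one_right hM hδle
    · set k' := k - L with hk'
      have hkk : k = k' + (L - 1) + 1 := by omega
      have hsum : ∑ i, linSeq A (0 : Fin n → ℝ) c k' i = 0 :=
        linSeq_sum_zero A hAnn hcol _ c (by simp) hc k'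
      have h1 := linSeq_shift A hAnn hcol (0 : Fin n → ℝ) c (L - 1) k'
      have h2 : norm1 (prodA A k' (L - 1) *ᵥ linSeq A (0 : Fin n → ℝ) c k')
          ≤ (1 - n * δ) * norm1 (linSeq A (0 : Fin n → ℝ) c k') :=
        contraction _ _ δ (hP k') (prodA_colsum A hcol k' (L - 1)) hsum
      have h3 : norm1 (linSeq A (0 : Fin n → ℝ) c k') ≤ L * norm1 c / ((n : ℝ) * δ) :=
        ih k' (by omega)
      have h4 := norm1_sub_add (linSeq A (0 : Fin n → ℝ) c (k' + (L - 1) + 1))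
        (prodA A k' (L - 1) *ᵥ linSeq A (0 : Fin n → ℝ) c k')
      have hcast : ((L - 1 : ℕ) + 1 : ℝ) = (L : ℝ) := by
        have : (L - 1 : ℕ) + 1 = L := by omega
        exact_mod_cast congrArg (Nat.cast : ℕ → ℝ) this
      have hnn : 0 ≤ norm1 (linSeq A (0 : Fin n → ℝ) c k') := norm1_nonneg _
      have h5 : (1 - n * δ) * norm1 (linSeq A (0 : Fin n → ℝ) c k')
          ≤ (1 - n * δ) * (L * norm1 c / ((n : ℝ) * δ)) :=
        mul_le_mul_of_nonneg_left h3 (by linarith)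
      have hdiv : (n : ℝ) * δ * (L * norm1 c / ((n : ℝ) * δ)) = L * norm1 c :=
        mul_div_cancel₀ _ (ne_of_gt hδpos)
      rw [hkk]
      calc norm1 (linSeq A (0 : Fin n → ℝ) c (k' + (L - 1) + 1))
          ≤ norm1 (fun i => linSeq A (0 : Fin n → ℝ) c (k' + (L - 1) + 1) i
              - (prodA A k' (L - 1) *ᵥ linSeq A (0 : Fin n → ℝ) c k') i)
            + norm1 (prodA A k' (L - 1) *ᵥ linSeq A (0 : Fin n → ℝ) c k') := h4
        _ ≤ ((L - 1 : ℕ) + 1 : ℝ) * norm1 c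
            + (1 - n * δ) * (L * norm1 c / ((n : ℝ) * δ)) := add_le_add h1 (le_trans h2 h5)
        _ = L * norm1 c / ((n : ℝ) * δ) := by
            rw [hcast, sub_mul, one_mul, hdiv]
            ring
end TauE


section TauLB
variable {n B : ℕ}

lemma tau_lb (hn : 1 ≤ n) (hB : 1 ≤ B)
    (E : ℕ → Finset (Fin n × Fin n)) (hloop : ∀ k i, (i, i) ∈ E k)
    (hconn : BStronglyConnected E B)
    (A : ℕ → Matrix (Fin n) (Fin n) ℝ) (hA : ∀ k, A k = weightMatrix (E k))
    (τ : Fin n → ℝ) (hτ : ∀ i, 0 ≤ τ i) (k : ℕ) (hk : (n + 1) * B ≤ k) (i : Fin n) :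
    ((k - (n + 1) * B + 1 : ℕ) : ℝ) * (((1:ℝ)/n) ^ ((n + 1) * B) * ∑ j, τ j)
      ≤ tauSeq A τ k i := by
  set L := (n + 1) * B with hL
  set δ := ((1:ℝ)/n) ^ L with hδ
  have hAnn := A_nonneg E A hA
  have hcol : ∀ k j, ∑ i, A k i j = 1 := fun k j => by
    rw [hA]; exact wm_colsum (E k) j (hloop k j)
  rw [tau_formula A hAnn hcol τ k i]
  have hL1 : 1 ≤ L := by
    have : 1 * 1 ≤ (n + 1) * B := Nat.mul_le_mul (by omega) hB
    omega
  have hterm_lb : ∀ s ∈ Finset.range (k - L + 1), δ * ∑ j, τ j ≤ (prodA A s (k - 1 - s) *ᵥ τ) i := by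
    intro s hs
    rw [Finset.mem_range] at hs
    have hms : L - 1 ≤ k - 1 - s := by omega
    rw [mulVec_apply']
    calc δ * ∑ j, τ j = ∑ j, δ * τ j := Finset.mul_sum _ _ _
      _ ≤ ∑ j, prodA A s (k - 1 - s) i j * τ j :=
          Finset.sum_le_sum fun j _ => mul_le_mul_of_nonneg_right
            (prodA_delta E hloop A hA hn hB hconn s (k - 1 - s) hms i j) (hτ j)
  have hterm_nn : ∀ s ∈ Finset.range k, 0 ≤ (prodA A s (k - 1 - s) *ᵥ τ) i := by
    intro s _
    rw [mulVec_apply']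
    exact Finset.sum_nonneg fun j _ =>
      mul_nonneg (prodA_nonneg A hAnn s (k - 1 - s) i j) (hτ j)
  have hsub : Finset.range (k - L + 1) ⊆ Finset.range k := by
    apply Finset.range_subset_range.mpr
    omega
  calc ((k - L + 1 : ℕ) : ℝ) * (δ * ∑ j, τ j)
      = (Finset.range (k - L + 1)).card • (δ * ∑ j, τ j) := by
        rw [Finset.card_range, nsmul_eq_mul]
    _ ≤ ∑ s ∈ Finset.range (k - L + 1), (prodA A s (k - 1 - s) *ᵥ τ) i :=
        Finset.card_nsmul_le_sum _ _ _ hterm_lb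
    _ ≤ ∑ s ∈ Finset.range k, (prodA A s (k - 1 - s) *ᵥ τ) i :=
        Finset.sum_le_sum_of_subset_of_nonneg hsub (fun s hs _ => hterm_nn s hs)
    _ ≤ τ i + ∑ s ∈ Finset.range k, (prodA A s (k - 1 - s) *ᵥ τ) i := by
        linarith [hτ i]
end TauLB

theorem expected_mean_process_rate_over_B_strongly_connected
    (n B : ℕ) (hn : 1 ≤ n) (hB : 1 ≤ B)
    (E : ℕ → Finset (Fin n × Fin n)) (hloop : ∀ k i, (i, i) ∈ E k)
    (hconn : BStronglyConnected E B)
    (A : ℕ → Matrix (Fin n) (Fin n) ℝ) (hA : ∀ k, A k = weightMatrix (E k))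
    (θ : Fin n → ℝ) (τ : Fin n → ℝ) (hτ : ∀ i, 0 < τ i)
    (θstar : ℝ) (hθstar : θstar = (∑ i, τ i * θ i) / (∑ j, τ j))
    (y0 : Fin n → ℝ)
    (y : ℕ → Fin n → ℝ) (hy : ∀ k i, y k i = thetaSeq A τ y0 (fun _ => θ) k i) :
    (∃ K : ℝ, 0 ≤ K ∧ ∀ k : ℕ, 1 ≤ k → ∀ i, |y k i - θstar| ≤ K / (k : ℝ)) ∧
    ∀ i, Filter.Tendsto (fun k => y k i) Filter.atTop (nhds θstar) := by
  -- basic facts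
  have hAnn := A_nonneg E A hA
  have hcol : ∀ k j, ∑ i, A k i j = 1 := fun k j => by
    rw [hA]; exact wm_colsum (E k) j (hloop k j)
  have hτ0 : ∀ i, 0 ≤ τ i := fun i => le_of_lt (hτ i)
  set L := (n + 1) * B with hLdef
  have hL1 : 1 ≤ L := by
    have : 1 * 1 ≤ (n + 1) * B := Nat.mul_le_mul (by omega) hB
    omega
  set δ := ((1:ℝ)/n) ^ L with hδdef
  have hnR : (0:ℝ) < n := by exact_mod_cast hn
  have hδpos : 0 < δ := by positivity
  have hnδpos : 0 < (n:ℝ) * δ := by positivity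
  have hnδle : (n:ℝ) * δ ≤ 1 := by
    have h1n : (1:ℝ)/n ≤ 1 := by
      rw [div_le_one hnR]; exact_mod_cast hn
    have h0n : (0:ℝ) ≤ 1/n := by positivity
    have hle : δ ≤ (1:ℝ)/n ^ 1 := by
      rw [hδdef]
      calc ((1:ℝ)/n) ^ L ≤ ((1:ℝ)/n) ^ 1 := pow_le_pow_of_le_one h0n h1n hL1
        _ = (1:ℝ)/n ^ 1 := by norm_num
    have : (n:ℝ) * δ ≤ (n:ℝ) * ((1:ℝ)/n) := by
      apply mul_le_mul_of_nonneg_left _ (le_of_lt hnR)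
      simpa using hle
    calc (n:ℝ) * δ ≤ (n:ℝ) * ((1:ℝ)/n) := this
      _ = 1 := by field_simp
  have hT : 0 < ∑ j, τ j := by
    apply Finset.sum_pos (fun j _ => hτ j)
    exact ⟨⟨0, by omega⟩, Finset.mem_univ _⟩
  set T := ∑ j, τ j with hTdef
  -- the error recursion
  set c : Fin n → ℝ := fun i => τ i * (θ i - θstar) with hcdef
  set e0 : Fin n → ℝ := fun i => τ i * (y0 i - θstar) with he0def
  have hcsum : ∑ i, c i = 0 := by
    rw [hcdef]
    have : ∀ i, τ i * (θ i - θstar) = τ i * θ i - θstar * τ i := fun i => by ring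
    simp only [this]
    rw [Finset.sum_sub_distrib, ← Finset.mul_sum, hθstar]
    field_simp
    simp [hTdef]
  have hτpos : ∀ k i, 0 < tauSeq A τ k i :=
    fun k i => lt_of_lt_of_le (hτ i) (tau_ge A hAnn hcol τ hτ0 k i)
  -- key splitting identity
  have hkey : ∀ k i, tauSeq A τ k i * (y k i - θstar)
      = linSeq A e0 (0 : Fin n → ℝ) k i + linSeq A (0 : Fin n → ℝ) c k i := by
    intro k
    induction k with
    | zero =>
      intro i
      have hy0 : y 0 i = y0 i := by rw [hy 0 i]; rfl
      show tauSeq A τ 0 i * (y 0 i - θstar) = e0 i + 0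
      rw [hy0, add_zero]
      rfl
    | succ k ih =>
      intro i
      have hyrec : y (k + 1) i
          = ((∑ j, A k i j * tauSeq A τ k j * y k j) + θ i * τ i) / tauSeq A τ (k + 1) i := by
        rw [hy (k+1) i]
        show ((∑ j, A k i j * tauSeq A τ k j * thetaSeq A τ y0 (fun _ => θ) k j) + θ i * τ i)
            / tauSeq A τ (k + 1) i = _
        congr 2
        exact Finset.sum_congr rfl fun j _ => by rw [hy k j]
      have hnum : tauSeq A τ (k+1) i * y (k+1) i
          = (∑ j, A k i j * tauSeq A τ k j * y k j) + θ i * τ i := by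
        rw [hyrec, mul_comm, div_mul_cancel₀ _ (ne_of_gt (hτpos (k+1) i))]
      have hτrec : tauSeq A τ (k+1) i = (∑ j, A k i j * tauSeq A τ k j) + τ i := rfl
      have hg : linSeq A e0 (0 : Fin n → ℝ) (k+1) i
          = ∑ j, A k i j * linSeq A e0 (0 : Fin n → ℝ) k j := by
        show (A k *ᵥ linSeq A e0 (0 : Fin n → ℝ) k) i + 0 = _
        rw [add_zero, mulVec_apply']
      have hf : linSeq A (0 : Fin n → ℝ) c (k+1) i
          = (∑ j, A k i j * linSeq A (0 : Fin n → ℝ) c k j) + c i := by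
        show (A k *ᵥ linSeq A (0 : Fin n → ℝ) c k) i + c i = _
        rw [mulVec_apply']
      have hGF : ∑ j, A k i j * (linSeq A e0 (0 : Fin n → ℝ) k j
            + linSeq A (0 : Fin n → ℝ) c k j)
          = ∑ j, A k i j * (tauSeq A τ k j * (y k j - θstar)) :=
        Finset.sum_congr rfl fun j _ => by rw [← ih j]
      have hexp : ∑ j, A k i j * (tauSeq A τ k j * (y k j - θstar))
          = (∑ j, A k i j * tauSeq A τ k j * y k j)
            - θstar * ∑ j, A k i j * tauSeq A τ k j := by
        calc ∑ j, A k i j * (tauSeq A τ k j * (y k j - θstar))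
            = ∑ j, (A k i j * tauSeq A τ k j * y k j
                - θstar * (A k i j * tauSeq A τ k j)) :=
              Finset.sum_congr rfl fun j _ => by ring
          _ = (∑ j, A k i j * tauSeq A τ k j * y k j)
                - θstar * ∑ j, A k i j * tauSeq A τ k j := by
              rw [Finset.sum_sub_distrib, Finset.mul_sum]
      have hsum_split : ∑ j, A k i j * (linSeq A e0 (0 : Fin n → ℝ) k j
            + linSeq A (0 : Fin n → ℝ) c k j)
          = (∑ j, A k i j * linSeq A e0 (0 : Fin n → ℝ) k j)
            + ∑ j, A k i j * linSeq A (0 : Fin n → ℝ) c k j := by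
        rw [← Finset.sum_add_distrib]
        exact Finset.sum_congr rfl fun j _ => by ring
      have lhs_eq : tauSeq A τ (k+1) i * (y (k+1) i - θstar)
          = (∑ j, A k i j * tauSeq A τ k j * y k j) + θ i * τ i
            - θstar * ((∑ j, A k i j * tauSeq A τ k j) + τ i) := by
        rw [mul_sub, hnum, hτrec]
        ring
      rw [hg, hf, lhs_eq]
      have hre : ∑ j, A k i j * linSeq A e0 (0 : Fin n → ℝ) k j
            + (∑ j, A k i j * linSeq A (0 : Fin n → ℝ) c k j + c i)
          = (∑ j, A k i j * (linSeq A e0 (0 : Fin n → ℝ) k j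
              + linSeq A (0 : Fin n → ℝ) c k j)) + c i := by
        rw [hsum_split]
        ring
      rw [hre, hGF, hexp]
      simp only [hcdef]
      ring
  -- uniform bound on the weighted error
  have hPdelta : ∀ t i j, δ ≤ prodA A t (L - 1) i j := fun t i j =>
    prodA_delta E hloop A hA hn hB hconn t (L - 1) le_rfl i j
  set M := (L : ℝ) * norm1 c / ((n:ℝ) * δ) with hMdef
  set C := norm1 e0 + M with hCdef
  have hMnn : 0 ≤ M := by
    rw [hMdef]
    have := norm1_nonneg c
    positivity
  have hCnn : 0 ≤ C := by
    rw [hCdef]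
    have := norm1_nonneg e0
    linarith
  have hbound : ∀ k i, |tauSeq A τ k i * (y k i - θstar)| ≤ C := by
    intro k i
    rw [hkey k i]
    calc |linSeq A e0 (0 : Fin n → ℝ) k i + linSeq A (0 : Fin n → ℝ) c k i|
        ≤ |linSeq A e0 (0 : Fin n → ℝ) k i| + |linSeq A (0 : Fin n → ℝ) c k i| := abs_add_le _ _
      _ ≤ norm1 (linSeq A e0 (0 : Fin n → ℝ) k) + norm1 (linSeq A (0 : Fin n → ℝ) c k) :=
          add_le_add (abs_le_norm1 _ i) (abs_le_norm1 _ i)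
      _ ≤ norm1 e0 + M :=
          add_le_add (linSeq_zero_c A hAnn hcol e0 k)
            (linSeq_contract A hAnn hcol c hcsum L hL1 δ hnδpos hnδle hPdelta k)
  have hyd : ∀ k i, |y k i - θstar| ≤ C / tauSeq A τ k i := by
    intro k i
    rw [le_div_iff₀ (hτpos k i)]
    calc |y k i - θstar| * tauSeq A τ k i
        = |tauSeq A τ k i * (y k i - θstar)| := by
          rw [abs_mul, abs_of_pos (hτpos k i)]
          ring
      _ ≤ C := hbound k i
  -- constants
  have hne : Nonempty (Fin n) := ⟨⟨0, by omega⟩⟩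
  set tmin := Finset.univ.inf' Finset.univ_nonempty τ with htmin
  have htmin_le : ∀ i, tmin ≤ τ i := fun i => Finset.inf'_le τ (Finset.mem_univ i)
  have htmin_pos : 0 < tmin := by
    rw [htmin, Finset.lt_inf'_iff]
    exact fun i _ => hτ i
  set K := max (2 * C / (δ * T)) ((2 * L : ℝ) * (C / tmin)) with hKdef
  have hKnn : 0 ≤ K := by
    apply le_max_iff.mpr
    left
    positivity
  have hrate : ∀ k : ℕ, 1 ≤ k → ∀ i, |y k i - θstar| ≤ K / (k : ℝ) := by
    intro k hk i
    have hkR : (0:ℝ) < k := by exact_mod_cast hk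
    rcases Nat.lt_or_ge k (2 * L) with hcase | hcase
    · -- small k
      have h1 : |y k i - θstar| ≤ C / tmin := by
        refine (hyd k i).trans ?_
        apply div_le_div_of_nonneg_left hCnn htmin_pos
        exact le_trans (htmin_le i) (tau_ge A hAnn hcol τ hτ0 k i)
      have h2 : C / tmin ≤ K / k := by
        have hk2L : (k : ℝ) ≤ 2 * L := by exact_mod_cast le_of_lt hcase
        have hCt : 0 ≤ C / tmin := by positivity
        have hKk : (k : ℝ) * (C / tmin) ≤ K :=
          calc (k : ℝ) * (C / tmin) ≤ (2 * L : ℝ) * (C / tmin) :=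
              mul_le_mul_of_nonneg_right hk2L hCt
            _ ≤ K := le_max_right _ _
        have hkne : (k : ℝ) ≠ 0 := ne_of_gt hkR
        calc C / tmin = (k : ℝ) * (C / tmin) / k := (mul_div_cancel_left₀ _ hkne).symm
          _ ≤ K / k := (div_le_div_iff_of_pos_right hkR).mpr hKk
      calc |y k i - θstar| ≤ C / tmin := h1
        _ ≤ K / k := h2
    · -- large k
      have hkL : L ≤ k := by omega
      have hlb := tau_lb hn hB E hloop hconn A hA τ hτ0 k (by omega) i
      have hcast : ((k - L + 1 : ℕ) : ℝ) = (k : ℝ) - L + 1 := by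
        push_cast [Nat.cast_sub hkL]
        ring
      have h2L : (2 * L : ℝ) ≤ k := by exact_mod_cast hcase
      have hhalf : (k : ℝ) / 2 * (δ * T) ≤ tauSeq A τ k i := by
        refine le_trans ?_ hlb
        rw [hcast]
        apply mul_le_mul_of_nonneg_right _ (by positivity)
        linarith
      have hpos2 : (0:ℝ) < (k : ℝ) / 2 * (δ * T) := by positivity
      have h1 : |y k i - θstar| ≤ C / ((k : ℝ) / 2 * (δ * T)) :=
        (hyd k i).trans (div_le_div_of_nonneg_left hCnn hpos2 hhalf)
      have h2 : C / ((k : ℝ) / 2 * (δ * T)) = (2 * C / (δ * T)) / k := by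
        field_simp
      rw [h2] at h1
      refine h1.trans ?_
      exact (div_le_div_iff_of_pos_right hkR).mpr (le_max_left _ _)
  refine ⟨⟨K, hKnn, hrate⟩, ?_⟩
  intro i
  have h0 : Filter.Tendsto (fun k : ℕ => y k i - θstar) Filter.atTop (nhds 0) := by
    refine squeeze_zero_norm' ?_ (tendsto_const_div_atTop_nhds_zero_nat K)
    filter_upwards [Filter.eventually_ge_atTop 1] with k hk
    rw [Real.norm_eq_abs]
    exact hrate k hk i
  have := h0.add_const θstar
  simpa using this
end
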